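/- arXiv:1906.09672 — 8 statements merged into one kernel-verified Lean document; each statement's English description precedes it below -/
import Mathlib

section
/- For every nonnegative measurable function f on (0,∞) and every p with 1 < p < ∞, the Hardy inequality holds: ∫₀^∞ ((1/x) ∫₀^x f(t) dt)^p dx ≤ (p/(p-1))^p ∫₀^∞ f(x)^p dx. -/
open MeasureTheory Set
open scoped ENNReal

lemma lint_Ioc_rpow {b x : ℝ} (hb : -1 < b) (hx : 0 < x) :
    ∫⁻ t in Set.Ioc (0:ℝ) x, ENNReal.ofReal (t ^ b) = ENNReal.ofReal (x ^ (b+1) / (b+1)) := by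
  rw [← ofReal_integral_eq_lintegral_ofReal ((intervalIntegral.intervalIntegrable_rpow' hb).1)]
  · congr 1
    rw [← intervalIntegral.integral_of_le hx.le, integral_rpow (Or.inl hb),
      Real.zero_rpow (by linarith), sub_zero]
  · filter_upwards [ae_restrict_mem measurableSet_Ioc] with t ht
    exact Real.rpow_nonneg ht.1.le _

lemma lint_Ioi_rpow {b t : ℝ} (hb : b < -1) (ht : 0 < t) :
    ∫⁻ x in Set.Ioi t, ENNReal.ofReal (x ^ b) = ENNReal.ofReal (-t ^ (b+1) / (b+1)) := by
  rw [← ofReal_integral_eq_lintegral_ofReal (integrableOn_Ioi_rpow_of_lt hb ht),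
    integral_Ioi_rpow_of_lt hb ht]
  filter_upwards [ae_restrict_mem measurableSet_Ioi] with x hx
  exact Real.rpow_nonneg (ht.trans hx).le _

/-- Hardy's inequality: for every nonnegative measurable `f` on `(0,∞)` and `1 < p < ∞`,
`∫₀^∞ ((1/x) ∫₀^x f)^p dx ≤ (p/(p-1))^p ∫₀^∞ f^p`. -/
theorem hardy_inequality (f : ℝ → ℝ≥0∞) (hf : Measurable f) (p : ℝ) (hp : 1 < p) :
    (∫⁻ x in Set.Ioi (0:ℝ),
        (ENNReal.ofReal (1/x) * ∫⁻ t in Set.Ioc (0:ℝ) x, f t) ^ p)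
      ≤ ENNReal.ofReal (p / (p - 1)) ^ p * ∫⁻ x in Set.Ioi (0:ℝ), (f x) ^ p := by
  have hp0 : (0:ℝ) < p := lt_trans one_pos hp
  have hp0' : p ≠ 0 := hp0.ne'
  have hp1 : p - 1 ≠ 0 := sub_ne_zero.mpr hp.ne'
  have hp1' : (0:ℝ) < p - 1 := by linarith
  set q : ℝ := p / (p - 1) with hqdef
  have hq0 : 0 < q := div_pos hp0 hp1'
  have hpq : p.HolderConjugate q := Real.HolderConjugate.conjExponent hp
  have hpinv : 1/p < 1 := by rw [div_lt_one hp0]; exact hp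
  set b : ℝ := 1 - 1/p with hbdef
  have hb0 : 0 < b := by simp only [hbdef]; linarith
  have hbq : b = 1/q := by
    simp only [hbdef, hqdef, one_div_div]
    field_simp
  have hbinv : b⁻¹ = q := by rw [hbq, one_div, inv_inv]
  set a : ℝ := 1/p - 2 with hadef
  have ha1 : a < -1 := by simp only [hadef]; linarith
  set r : ℝ := b / p with hrdef
  have hrp : r * p = b := by rw [hrdef, div_mul_cancel₀ _ hp0']
  have hrq : -r * q = -(1/p) := by
    simp only [hrdef, hbdef, hqdef]; field_simp
  set g : ℝ → ℝ≥0∞ := fun t => f t ^ p * ENNReal.ofReal (t ^ b) with hgdef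
  have hg : Measurable g := (hf.pow_const p).mul ((measurable_id'.pow_const b).ennreal_ofReal)
  -- pointwise Hölder bound
  have key : ∀ x : ℝ, 0 < x →
      (ENNReal.ofReal (1/x) * ∫⁻ t in Set.Ioc (0:ℝ) x, f t) ^ p
        ≤ ENNReal.ofReal (q ^ (p/q)) *
            (ENNReal.ofReal (x ^ a) * ∫⁻ t in Set.Ioc (0:ℝ) x, g t) := by
    intro x hx
    have hF : Measurable (fun t : ℝ => f t * ENNReal.ofReal (t ^ r)) :=
      hf.mul ((measurable_id'.pow_const r).ennreal_ofReal)
    have hG : Measurable (fun t : ℝ => ENNReal.ofReal (t ^ (-r))) :=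
      (measurable_id'.pow_const (-r)).ennreal_ofReal
    have H := ENNReal.lintegral_mul_le_Lp_mul_Lq (volume.restrict (Set.Ioc (0:ℝ) x)) hpq
      hF.aemeasurable hG.aemeasurable
    have e1 : (∫⁻ t in Set.Ioc (0:ℝ) x,
        ((fun t : ℝ => f t * ENNReal.ofReal (t ^ r)) * fun t : ℝ => ENNReal.ofReal (t ^ (-r))) t)
        = ∫⁻ t in Set.Ioc (0:ℝ) x, f t := by
      refine lintegral_congr_ae ?_
      filter_upwards [ae_restrict_mem measurableSet_Ioc] with t ht
      simp only [Pi.mul_apply]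
      rw [mul_assoc, ← ENNReal.ofReal_mul (Real.rpow_nonneg ht.1.le _),
        ← Real.rpow_add ht.1, add_neg_cancel, Real.rpow_zero, ENNReal.ofReal_one, mul_one]
    have e2 : (∫⁻ t in Set.Ioc (0:ℝ) x, (f t * ENNReal.ofReal (t ^ r)) ^ p)
        = ∫⁻ t in Set.Ioc (0:ℝ) x, g t := by
      refine lintegral_congr_ae ?_
      filter_upwards [ae_restrict_mem measurableSet_Ioc] with t ht
      rw [ENNReal.mul_rpow_of_nonneg _ _ hp0.le,
        ENNReal.ofReal_rpow_of_pos (Real.rpow_pos_of_pos ht.1 r),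
        ← Real.rpow_mul ht.1.le, hrp]
    have e3 : (∫⁻ t in Set.Ioc (0:ℝ) x, (ENNReal.ofReal (t ^ (-r))) ^ q)
        = ENNReal.ofReal (q * x ^ b) := by
      have hcongr : (∫⁻ t in Set.Ioc (0:ℝ) x, (ENNReal.ofReal (t ^ (-r))) ^ q)
          = ∫⁻ t in Set.Ioc (0:ℝ) x, ENNReal.ofReal (t ^ (-(1/p))) := by
        refine lintegral_congr_ae ?_
        filter_upwards [ae_restrict_mem measurableSet_Ioc] with t ht
        rw [ENNReal.ofReal_rpow_of_pos (Real.rpow_pos_of_pos ht.1 _),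
          ← Real.rpow_mul ht.1.le, hrq]
      rw [hcongr, lint_Ioc_rpow (by linarith) hx]
      congr 1
      have h1 : -(1/p) + 1 = b := by simp only [hbdef]; ring
      rw [h1, div_eq_mul_inv, hbinv, mul_comm]
    rw [e1, e2, e3] at H
    have h2 : (ENNReal.ofReal (1/x) * ∫⁻ t in Set.Ioc (0:ℝ) x, f t) ^ p
        ≤ (ENNReal.ofReal (1/x) * ((∫⁻ t in Set.Ioc (0:ℝ) x, g t) ^ (1/p)
            * ENNReal.ofReal (q * x ^ b) ^ (1/q))) ^ p :=
      ENNReal.rpow_le_rpow (mul_le_mul_right H _) hp0.le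
    refine h2.trans_eq ?_
    rw [ENNReal.mul_rpow_of_nonneg _ _ hp0.le, ENNReal.mul_rpow_of_nonneg _ _ hp0.le,
      ← ENNReal.rpow_mul, ← ENNReal.rpow_mul, one_div_mul_cancel hp0', ENNReal.rpow_one,
      show 1/q * p = p/q by ring]
    have coeff : (ENNReal.ofReal (1/x)) ^ p * (ENNReal.ofReal (q * x ^ b)) ^ (p/q)
        = ENNReal.ofReal (q ^ (p/q)) * ENNReal.ofReal (x ^ a) := by
      rw [ENNReal.ofReal_rpow_of_pos (by positivity),
        ENNReal.ofReal_rpow_of_pos (by positivity),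
        ← ENNReal.ofReal_mul (by positivity), ← ENNReal.ofReal_mul (by positivity)]
      congr 1
      rw [Real.mul_rpow hq0.le (Real.rpow_nonneg hx.le _), ← Real.rpow_mul hx.le,
        one_div, ← Real.rpow_neg_one x, ← Real.rpow_mul hx.le, mul_left_comm,
        ← Real.rpow_add hx]
      congr 1
      simp only [hadef, hbdef, hqdef]
      field_simp
      ring
    calc ENNReal.ofReal (1/x) ^ p * ((∫⁻ t in Set.Ioc (0:ℝ) x, g t)
            * ENNReal.ofReal (q * x ^ b) ^ (p/q))
        = (ENNReal.ofReal (1/x) ^ p * ENNReal.ofReal (q * x ^ b) ^ (p/q))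
            * ∫⁻ t in Set.Ioc (0:ℝ) x, g t := by ring
      _ = (ENNReal.ofReal (q ^ (p/q)) * ENNReal.ofReal (x ^ a))
            * ∫⁻ t in Set.Ioc (0:ℝ) x, g t := by rw [coeff]
      _ = _ := by ring
  -- Tonelli
  set F : ℝ → ℝ → ℝ≥0∞ :=
    fun x t => (Set.Iic x).indicator (fun t' => ENNReal.ofReal (x ^ a) * g t') t with hFdef
  have hFmeas : Measurable (Function.uncurry F) := by
    have hset : MeasurableSet {z : ℝ × ℝ | z.2 ≤ z.1} := measurableSet_le measurable_snd measurable_fst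
    have : Function.uncurry F = Set.indicator {z : ℝ × ℝ | z.2 ≤ z.1}
        (fun z => ENNReal.ofReal (z.1 ^ a) * g z.2) := by
      ext z
      simp only [Function.uncurry, hFdef, Set.indicator_apply, Set.mem_Iic, Set.mem_setOf_eq]
    rw [this]
    exact (((measurable_fst.pow_const a).ennreal_ofReal).mul (hg.comp measurable_snd)).indicator hset
  have T : (∫⁻ x in Set.Ioi (0:ℝ), ENNReal.ofReal (x ^ a) * ∫⁻ t in Set.Ioc (0:ℝ) x, g t)
      = ∫⁻ t in Set.Ioi (0:ℝ), (∫⁻ x in Set.Ioi t, ENNReal.ofReal (x ^ a)) * g t := by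
    have step1 : ∀ x : ℝ, 0 < x →
        (ENNReal.ofReal (x ^ a) * ∫⁻ t in Set.Ioc (0:ℝ) x, g t)
          = ∫⁻ t in Set.Ioi (0:ℝ), F x t := by
      intro x hx
      rw [hFdef, lintegral_indicator measurableSet_Iic, Measure.restrict_restrict measurableSet_Iic,
        Set.inter_comm, Set.Ioi_inter_Iic, lintegral_const_mul' _ _ ENNReal.ofReal_ne_top]
    have step2 : ∀ t : ℝ, 0 < t →
        (∫⁻ x in Set.Ioi (0:ℝ), F x t)
          = (∫⁻ x in Set.Ioi t, ENNReal.ofReal (x ^ a)) * g t := by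
      intro t ht
      have hFt : ∀ x : ℝ, F x t = (Set.Ici t).indicator
          (fun x' => ENNReal.ofReal (x' ^ a) * g t) x := by
        intro x
        by_cases h : t ≤ x <;>
          simp [hFdef, Set.indicator_apply, Set.mem_Iic, Set.mem_Ici, h]
      simp only [hFt]
      rw [lintegral_indicator measurableSet_Ici, Measure.restrict_restrict measurableSet_Ici,
        Set.inter_eq_left.mpr (Set.Ici_subset_Ioi.mpr ht),
        ← Measure.restrict_congr_set Ioi_ae_eq_Ici,
        lintegral_mul_const _ ((measurable_id'.pow_const a).ennreal_ofReal)]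
    calc (∫⁻ x in Set.Ioi (0:ℝ), ENNReal.ofReal (x ^ a) * ∫⁻ t in Set.Ioc (0:ℝ) x, g t)
        = ∫⁻ x in Set.Ioi (0:ℝ), ∫⁻ t in Set.Ioi (0:ℝ), F x t := by
          refine lintegral_congr_ae ?_
          filter_upwards [ae_restrict_mem measurableSet_Ioi] with x hx
          exact step1 x hx
      _ = ∫⁻ t in Set.Ioi (0:ℝ), ∫⁻ x in Set.Ioi (0:ℝ), F x t :=
          lintegral_lintegral_swap hFmeas.aemeasurable
      _ = _ := by
          refine lintegral_congr_ae ?_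
          filter_upwards [ae_restrict_mem measurableSet_Ioi] with t ht
          exact step2 t ht
  -- inner integral evaluation
  have inner : ∀ t : ℝ, 0 < t →
      (∫⁻ x in Set.Ioi t, ENNReal.ofReal (x ^ a)) * g t = ENNReal.ofReal q * f t ^ p := by
    intro t ht
    rw [lint_Ioi_rpow ha1 ht]
    have h1 : -t ^ (a+1) / (a+1) = q * t ^ (-b) := by
      have hab : a + 1 = -b := by simp only [hadef, hbdef]; ring
      rw [hab, neg_div_neg_eq, div_eq_mul_inv, hbinv, mul_comm]
    have h2 : ENNReal.ofReal (t ^ (-b)) * ENNReal.ofReal (t ^ b) = 1 := by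
      rw [← ENNReal.ofReal_mul (Real.rpow_nonneg ht.le _), ← Real.rpow_add ht,
        neg_add_cancel, Real.rpow_zero, ENNReal.ofReal_one]
    rw [h1, ENNReal.ofReal_mul hq0.le, hgdef]
    calc ENNReal.ofReal q * ENNReal.ofReal (t ^ (-b)) * (f t ^ p * ENNReal.ofReal (t ^ b))
        = (ENNReal.ofReal q * f t ^ p) * (ENNReal.ofReal (t ^ (-b)) * ENNReal.ofReal (t ^ b)) :=
          mul_mul_mul_comm _ _ _ _
      _ = ENNReal.ofReal q * f t ^ p := by rw [h2, mul_one]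
  -- assemble
  calc (∫⁻ x in Set.Ioi (0:ℝ), (ENNReal.ofReal (1/x) * ∫⁻ t in Set.Ioc (0:ℝ) x, f t) ^ p)
      ≤ ∫⁻ x in Set.Ioi (0:ℝ), ENNReal.ofReal (q ^ (p/q)) *
          (ENNReal.ofReal (x ^ a) * ∫⁻ t in Set.Ioc (0:ℝ) x, g t) := by
        refine lintegral_mono_ae ?_
        filter_upwards [ae_restrict_mem measurableSet_Ioi] with x hx
        exact key x hx
    _ = ENNReal.ofReal (q ^ (p/q)) * ∫⁻ x in Set.Ioi (0:ℝ),
          ENNReal.ofReal (x ^ a) * ∫⁻ t in Set.Ioc (0:ℝ) x, g t :=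
        lintegral_const_mul' _ _ ENNReal.ofReal_ne_top
    _ = ENNReal.ofReal (q ^ (p/q)) * ∫⁻ t in Set.Ioi (0:ℝ),
          (∫⁻ x in Set.Ioi t, ENNReal.ofReal (x ^ a)) * g t := by rw [T]
    _ = ENNReal.ofReal (q ^ (p/q)) * ∫⁻ t in Set.Ioi (0:ℝ), ENNReal.ofReal q * f t ^ p := by
        congr 1
        refine lintegral_congr_ae ?_
        filter_upwards [ae_restrict_mem measurableSet_Ioi] with t ht
        exact inner t ht
    _ = (ENNReal.ofReal (q ^ (p/q)) * ENNReal.ofReal q) * ∫⁻ t in Set.Ioi (0:ℝ), f t ^ p := by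
        rw [lintegral_const_mul' _ _ ENNReal.ofReal_ne_top, mul_assoc]
    _ = ENNReal.ofReal q ^ p * ∫⁻ x in Set.Ioi (0:ℝ), f x ^ p := by
        congr 1
        rw [← ENNReal.ofReal_mul (by positivity), ENNReal.ofReal_rpow_of_pos hq0]
        congr 1
        have hpq1 : p/q + 1 = p := by
          simp only [hqdef]; field_simp; ring
        rw [← Real.rpow_add_one hq0.ne' (p/q), hpq1]
end

section
/- Let X be a Banach function space (Banach ideal space of measurable functions with the ideal property) on I = [0,1]. The Copson space C*X := {f : C*|f| ∈ X} is nontrivial (≠ {0}) if and only if there exists 0 < λ < 1 such that the indicator function χ_{[0,λ]} belongs to X. -/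
open MeasureTheory Filter Set
open scoped ENNReal

noncomputable section

/-- A Banach function space (Banach ideal space) of measurable functions on `I ⊆ ℝ`,
with the ideal property. -/
structure BanachFunctionSpace (I : Set ℝ) where
  Mem : (ℝ → ℝ) → Prop
  norm : (ℝ → ℝ) → ℝ
  mem_congr : ∀ f g : ℝ → ℝ, (∀ᵐ x ∂(volume.restrict I), f x = g x) → Mem f → Mem g
  zero_mem : Mem 0
  add_mem : ∀ f g, Mem f → Mem g → Mem (f + g)
  smul_mem : ∀ (c : ℝ) (f), Mem f → Mem (c • f)
  norm_nonneg : ∀ f, 0 ≤ norm f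
  norm_zero : norm 0 = 0
  norm_eq_zero : ∀ f, Mem f → norm f = 0 → (∀ᵐ x ∂(volume.restrict I), f x = 0)
  norm_add_le : ∀ f g, Mem f → Mem g → norm (f + g) ≤ norm f + norm g
  norm_smul : ∀ (c : ℝ) (f), norm (c • f) = |c| * norm f
  ideal_mem : ∀ f g, (∀ᵐ x ∂(volume.restrict I), |f x| ≤ |g x|) → Mem g → Mem f
  ideal_norm : ∀ f g, (∀ᵐ x ∂(volume.restrict I), |f x| ≤ |g x|) → Mem g → norm f ≤ norm g
  complete : ∀ f : ℕ → (ℝ → ℝ), (∀ n, Mem (f n)) →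
      (∀ ε : ℝ, 0 < ε → ∃ N, ∀ m ≥ N, ∀ n ≥ N, norm (f m - f n) < ε) →
      ∃ g, Mem g ∧ Tendsto (fun n => norm (f n - g)) atTop (nhds 0)

/-- The Cesàro operator `Cf(x) = (1/x) ∫₀ˣ |f(t)| dt`, with values in `[0,∞]`. -/
def ces (f : ℝ → ℝ) (x : ℝ) : ℝ≥0∞ :=
  ENNReal.ofReal (1/x) * ∫⁻ t in Set.Ioc (0:ℝ) x, ENNReal.ofReal |f t|

/-- The real-valued version of `C|f|`. -/
def cesR (f : ℝ → ℝ) : ℝ → ℝ := fun x => (ces f x).toReal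

/-- The Copson operator `C*f(x) = ∫_{I ∩ [x,∞)} |f(t)|/t dt`, with values in `[0,∞]`. -/
def cop (I : Set ℝ) (f : ℝ → ℝ) (x : ℝ) : ℝ≥0∞ :=
  ∫⁻ t in I ∩ Set.Ici x, ENNReal.ofReal (|f t| / t)

/-- The real-valued version of `C*|f|`. -/
def copR (I : Set ℝ) (f : ℝ → ℝ) : ℝ → ℝ := fun x => (cop I f x).toReal

/-- Membership in the Cesàro space `CX`: `C|f|` is a.e. finite on `I` and belongs to `X`. -/
def MemCX (I : Set ℝ) (X : BanachFunctionSpace I) (f : ℝ → ℝ) : Prop :=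
  (∀ᵐ x ∂(volume.restrict I), ces f x ≠ ⊤) ∧ X.Mem (cesR f)

/-- Membership in the Copson space `C*X`. -/
def MemCopX (I : Set ℝ) (X : BanachFunctionSpace I) (f : ℝ → ℝ) : Prop :=
  (∀ᵐ x ∂(volume.restrict I), cop I f x ≠ ⊤) ∧ X.Mem (copR I f)

/-- Boundedness of the Cesàro operator on `X`. -/
def CBounded (I : Set ℝ) (X : BanachFunctionSpace I) : Prop :=
  ∃ M : ℝ, ∀ f, X.Mem f → MemCX I X f ∧ X.norm (cesR f) ≤ M * X.norm f

theorem cop_anti' (I : Set ℝ) (f : ℝ → ℝ) {x y : ℝ} (hxy : x ≤ y) :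
    cop I f y ≤ cop I f x :=
  lintegral_mono_set (Set.inter_subset_inter_right _ (Set.Ici_subset_Ici.mpr hxy))

/-- Lemma 3.1: for a Banach function space `X` on `[0,1]`, the Copson space `C*X` is
nontrivial iff `χ_{[0,λ]} ∈ X` for some `0 < λ < 1`. -/
theorem copson_nontrivial_iff (X : BanachFunctionSpace (Set.Icc (0:ℝ) 1)) :
    (∃ f : ℝ → ℝ, Measurable f ∧ MemCopX (Set.Icc (0:ℝ) 1) X f ∧
        ¬ (∀ᵐ x ∂(volume.restrict (Set.Icc (0:ℝ) 1)), f x = 0))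
      ↔ ∃ lam : ℝ, 0 < lam ∧ lam < 1 ∧
          X.Mem ((Set.Icc (0:ℝ) lam).indicator fun _ => (1:ℝ)) := by
  constructor
  · rintro ⟨f, hf, ⟨hfin, hmem⟩, hne⟩
    set S : Set ℝ := {t | f t ≠ 0} with hSdef
    have hSmeas : MeasurableSet S := by
      have : S = f ⁻¹' ({0}ᶜ) := rfl
      rw [this]; exact hf (measurableSet_singleton 0).compl
    have hS : volume (S ∩ Set.Icc (0:ℝ) 1) ≠ 0 := by
      intro h
      apply hne
      rw [MeasureTheory.ae_iff]
      have hset : {x | ¬ f x = 0} = S := rfl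
      rw [hset, Measure.restrict_apply hSmeas, h]
    -- find b with positive mass of S on [b,1]
    obtain ⟨n, hn⟩ : ∃ n : ℕ, volume (S ∩ Set.Icc (1/((n:ℝ)+2)) 1) ≠ 0 := by
      by_contra hcon
      push_neg at hcon
      have hU : volume (⋃ n : ℕ, S ∩ Set.Icc (1/((n:ℝ)+2)) 1) = 0 :=
        measure_iUnion_null hcon
      have hsub : S ∩ Set.Icc (0:ℝ) 1 ⊆ (⋃ n : ℕ, S ∩ Set.Icc (1/((n:ℝ)+2)) 1) ∪ {0} := by
        rintro t ⟨htS, ht0, ht1⟩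
        rcases eq_or_lt_of_le ht0 with h0 | h0
        · exact Or.inr (by simp [← h0])
        · left
          obtain ⟨n, hn⟩ := exists_nat_ge (1/t)
          refine Set.mem_iUnion.mpr ⟨n, htS, ?_, ht1⟩
          rw [div_le_iff₀ (by positivity)]
          rw [div_le_iff₀ h0] at hn
          nlinarith
      apply hS
      refine le_antisymm ?_ zero_le
      calc volume (S ∩ Set.Icc (0:ℝ) 1)
          ≤ volume ((⋃ n : ℕ, S ∩ Set.Icc (1/((n:ℝ)+2)) 1) ∪ ({0} : Set ℝ)) :=
          measure_mono hsub
        _ ≤ volume (⋃ n : ℕ, S ∩ Set.Icc (1/((n:ℝ)+2)) 1) + volume ({0} : Set ℝ) :=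
          measure_union_le _ _
        _ = 0 := by rw [hU, Real.volume_singleton, add_zero]
    set b : ℝ := 1/((n:ℝ)+2) with hbdef
    have hb0 : 0 < b := by positivity
    have hb2 : b ≤ 1/2 := by
      rw [hbdef, div_le_div_iff₀ (by positivity) (by norm_num)]
      have : (0:ℝ) ≤ n := Nat.cast_nonneg n
      linarith
    have hb1 : b < 1 := lt_of_le_of_lt hb2 (by norm_num)
    -- positivity of cop at b
    have hgmeas : Measurable fun t => ENNReal.ofReal (|f t| / t) :=
      (hf.abs.div measurable_id).ennreal_ofReal
    have hposb : 0 < cop (Set.Icc (0:ℝ) 1) f b := by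
      rw [cop, lintegral_pos_iff_support hgmeas]
      have hTsub : S ∩ Set.Icc b 1 ⊆ Function.support fun t => ENNReal.ofReal (|f t| / t) := by
        rintro t ⟨htS, htb, ht1⟩
        have htpos : 0 < t := lt_of_lt_of_le hb0 htb
        simp only [Function.mem_support, ne_eq, ENNReal.ofReal_eq_zero, not_le]
        exact div_pos (abs_pos.mpr htS) htpos
      have hTI : S ∩ Set.Icc b 1 ⊆ Set.Icc (0:ℝ) 1 ∩ Set.Ici b := by
        rintro t ⟨htS, htb, ht1⟩
        exact ⟨⟨le_trans hb0.le htb, ht1⟩, htb⟩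
      calc (0:ℝ≥0∞) < volume (S ∩ Set.Icc b 1) := pos_iff_ne_zero.mpr hn
        _ = (volume.restrict (Set.Icc (0:ℝ) 1 ∩ Set.Ici b)) (S ∩ Set.Icc b 1) := by
            rw [Measure.restrict_apply (hSmeas.inter measurableSet_Icc),
              Set.inter_eq_self_of_subset_left hTI]
        _ ≤ (volume.restrict (Set.Icc (0:ℝ) 1 ∩ Set.Ici b))
              (Function.support fun t => ENNReal.ofReal (|f t| / t)) :=
            measure_mono hTsub
    -- find lam in (0,b) with finite cop
    have hIoo : (volume.restrict (Set.Icc (0:ℝ) 1)) (Set.Ioo 0 b) ≠ 0 := by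
      rw [Measure.restrict_apply measurableSet_Ioo,
        Set.inter_eq_self_of_subset_left (show Set.Ioo (0:ℝ) b ⊆ Set.Icc (0:ℝ) 1 from fun t ht => ⟨ht.1.le, le_trans ht.2.le hb1.le⟩),
        Real.volume_Ioo]
      simp [hb0]
    obtain ⟨lam, hlam_mem, hlam_fin⟩ :=
      ((frequently_ae_mem_iff.mpr hIoo).and_eventually hfin).exists
    obtain ⟨hlam0, hlamb⟩ := hlam_mem
    set c : ℝ := (cop (Set.Icc (0:ℝ) 1) f lam).toReal with hcdef
    have hclam : 0 < cop (Set.Icc (0:ℝ) 1) f lam := lt_of_lt_of_le hposb (cop_anti' _ f hlamb.le)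
    have hc : 0 < c := ENNReal.toReal_pos hclam.ne' hlam_fin
    refine ⟨lam, hlam0, lt_trans hlamb hb1, ?_⟩
    have hsmul := X.smul_mem c⁻¹ _ hmem
    apply X.ideal_mem _ _ ?_ hsmul
    filter_upwards [hfin] with x hx
    by_cases hxmem : x ∈ Set.Icc (0:ℝ) lam
    · rw [Set.indicator_of_mem hxmem]
      have h1 : c ≤ copR (Set.Icc (0:ℝ) 1) f x :=
        ENNReal.toReal_mono hx (cop_anti' _ f hxmem.2)
      have h2 : (0:ℝ) ≤ c⁻¹ * copR (Set.Icc (0:ℝ) 1) f x :=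
        mul_nonneg (inv_nonneg.mpr hc.le) ENNReal.toReal_nonneg
      have h3 : (1:ℝ) ≤ c⁻¹ * copR (Set.Icc (0:ℝ) 1) f x := by
        calc (1:ℝ) = c⁻¹ * c := (inv_mul_cancel₀ hc.ne').symm
          _ ≤ c⁻¹ * copR (Set.Icc (0:ℝ) 1) f x :=
            mul_le_mul_of_nonneg_left h1 (inv_nonneg.mpr hc.le)
      calc |(1:ℝ)| = 1 := abs_one
        _ ≤ c⁻¹ * copR (Set.Icc (0:ℝ) 1) f x := h3
        _ = |(c⁻¹ • copR (Set.Icc (0:ℝ) 1) f) x| := by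
            rw [Pi.smul_apply, smul_eq_mul, abs_of_nonneg h2]
    · rw [Set.indicator_of_notMem hxmem, abs_zero]
      exact abs_nonneg _
  · rintro ⟨lam, hlam0, hlam1, hX⟩
    set f : ℝ → ℝ := (Set.Icc (lam/2) lam).indicator (fun _ => (1:ℝ)) with hfdef
    have hfmeas : Measurable f := measurable_const.indicator measurableSet_Icc
    have hgle : ∀ t, ENNReal.ofReal (|f t| / t)
        ≤ (Set.Icc (lam/2) lam).indicator (fun _ => ENNReal.ofReal (2/lam)) t := by
      intro t
      by_cases ht : t ∈ Set.Icc (lam/2) lam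
      · rw [Set.indicator_of_mem ht]
        have ht0 : 0 < t := lt_of_lt_of_le (half_pos hlam0) ht.1
        apply ENNReal.ofReal_le_ofReal
        rw [hfdef, Set.indicator_of_mem ht, abs_one, div_le_div_iff₀ ht0 hlam0]
        linarith [ht.1]
      · rw [Set.indicator_of_notMem ht, hfdef, Set.indicator_of_notMem ht]
        simp
    have hbound : ∀ x, cop (Set.Icc (0:ℝ) 1) f x ≤ 1 := by
      intro x
      calc cop (Set.Icc (0:ℝ) 1) f x ≤ ∫⁻ t in Set.Icc (0:ℝ) 1 ∩ Set.Ici x,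
            (Set.Icc (lam/2) lam).indicator (fun _ => ENNReal.ofReal (2/lam)) t :=
          lintegral_mono fun t => hgle t
        _ ≤ ∫⁻ t, (Set.Icc (lam/2) lam).indicator (fun _ => ENNReal.ofReal (2/lam)) t :=
          setLIntegral_le_lintegral _ _
        _ = ENNReal.ofReal (2/lam) * volume (Set.Icc (lam/2) lam) :=
          lintegral_indicator_const measurableSet_Icc _
        _ = ENNReal.ofReal (2/lam) * ENNReal.ofReal (lam - lam/2) := by
          rw [Real.volume_Icc]
        _ = ENNReal.ofReal ((2/lam) * (lam - lam/2)) := by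
          rw [ENNReal.ofReal_mul (by positivity)]
        _ = 1 := by
          rw [show (2/lam) * (lam - lam/2) = 1 by field_simp; ring, ENNReal.ofReal_one]
    have hzero : ∀ x, lam < x → cop (Set.Icc (0:ℝ) 1) f x = 0 := by
      intro x hx
      have h0 : ∀ t ∈ Set.Icc (0:ℝ) 1 ∩ Set.Ici x,
          ENNReal.ofReal (|f t| / t) = (0:ℝ≥0∞) := by
        rintro t ⟨htI, htx⟩
        have hnm : t ∉ Set.Icc (lam/2) lam := by
          rintro ⟨h1, h2⟩
          have := lt_of_lt_of_le hx (Set.mem_Ici.mp htx)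
          linarith
        simp [hfdef, Set.indicator_of_notMem hnm]
      calc cop (Set.Icc (0:ℝ) 1) f x
          = ∫⁻ _ in Set.Icc (0:ℝ) 1 ∩ Set.Ici x, (0:ℝ≥0∞) :=
            setLIntegral_congr_fun (measurableSet_Icc.inter measurableSet_Ici)
              h0
        _ = 0 := lintegral_zero
    refine ⟨f, hfmeas, ?_, ?_⟩
    · refine And.intro ?_ ?_
      · exact Filter.Eventually.of_forall fun x =>
          ne_top_of_le_ne_top ENNReal.one_ne_top (hbound x)
      · apply X.ideal_mem _ _ ?_ hX
        filter_upwards [ae_restrict_mem measurableSet_Icc] with x hx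
        by_cases hxl : x ≤ lam
        · have hxmem : x ∈ Set.Icc (0:ℝ) lam := ⟨hx.1, hxl⟩
          rw [Set.indicator_of_mem hxmem, abs_one]
          rw [copR, abs_of_nonneg ENNReal.toReal_nonneg]
          calc (cop (Set.Icc (0:ℝ) 1) f x).toReal ≤ (1:ℝ≥0∞).toReal :=
              ENNReal.toReal_mono ENNReal.one_ne_top (hbound x)
            _ = 1 := ENNReal.toReal_one
        · rw [copR, hzero x (lt_of_not_ge hxl)]
          simp
    · intro h
      rw [MeasureTheory.ae_iff] at h
      have hset : {x | ¬ f x = 0} = Set.Icc (lam/2) lam := by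
        ext x
        constructor
        · intro hx
          by_contra hmem
          exact hx (by rw [hfdef]; exact Set.indicator_of_notMem hmem _)
        · intro hx
          have h1 : f x = 1 := by rw [hfdef]; exact Set.indicator_of_mem hx _
          simp only [Set.mem_setOf_eq, h1]
          norm_num
      rw [hset, Measure.restrict_apply measurableSet_Icc,
        Set.inter_eq_self_of_subset_left
          (show Set.Icc (lam/2) lam ⊆ Set.Icc (0:ℝ) 1 from fun t ht =>
            ⟨le_trans (half_pos hlam0).le ht.1, le_trans ht.2 hlam1.le⟩),
        Real.volume_Icc] at h
      rw [ENNReal.ofReal_eq_zero] at h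
      linarith
end
end

section
/- Let X be a Banach function space on I (I = [0,1] or [0,∞)) such that the Cesàro space CX := {f : C|f| ∈ X} with norm ‖f‖_{CX} = ‖C|f|‖_X is nontrivial. Then there exist 0 < a < b < m(I) such that for all f ∈ CX with supp(f) ⊂ [a,b]: ‖(1/x)χ_{[b,m(I))}(x)‖_X · ‖f‖_{L¹} ≤ ‖f‖_{CX} ≤ ‖(1/x)χ_{[a,m(I))}(x)‖_X · ‖f‖_{L¹}. -/
open MeasureTheory Filter Set
open scoped ENNReal

noncomputable section

/-- Auxiliary: from an a.e. property on `volume.restrict I` and a subset `S ⊆ I` of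
positive measure, extract a point of `S` satisfying the property. -/
lemma exists_mem_ae_aux {P : ℝ → Prop} {I S : Set ℝ} (hImeas : MeasurableSet I)
    (hP : ∀ᵐ x ∂(volume.restrict I), P x) (hS : S ⊆ I) (hSpos : volume S ≠ 0) :
    ∃ x ∈ S, P x := by
  by_contra h
  push_neg at h
  have h0 : volume.restrict I {x | ¬ P x} = 0 := ae_iff.mp hP
  rw [Measure.restrict_apply' hImeas] at h0
  refine hSpos (measure_mono_null ?_ h0)
  intro x hx
  exact ⟨h x hx, hS hx⟩

/-- Lemma 4.1: if `CX ≠ {0}`, there are `0 < a < b < m(I)` such that for all `f ∈ CX`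
supported in `[a,b]`:
`‖(1/x)χ_{[b,m(I))}‖_X ‖f‖_{L¹} ≤ ‖f‖_{CX} ≤ ‖(1/x)χ_{[a,m(I))}‖_X ‖f‖_{L¹}`. -/
theorem cesaro_middle_L1 (I : Set ℝ) (hI : I = Set.Icc 0 1 ∨ I = Set.Ici 0)
    (X : BanachFunctionSpace I)
    (hne : ∃ f : ℝ → ℝ, Measurable f ∧ MemCX I X f ∧
        ¬ (∀ᵐ x ∂(volume.restrict I), f x = 0)) :
    ∃ a b : ℝ, 0 < a ∧ a < b ∧ b ∈ interior I ∧
      X.Mem ((I ∩ Set.Ici a).indicator fun x => 1/x) ∧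
      X.Mem ((I ∩ Set.Ici b).indicator fun x => 1/x) ∧
      ∀ f : ℝ → ℝ, Measurable f → MemCX I X f → Function.support f ⊆ Set.Icc a b →
        X.norm ((I ∩ Set.Ici b).indicator fun x => 1/x) *
            (∫⁻ t in I, ENNReal.ofReal |f t|).toReal ≤ X.norm (cesR f) ∧
        X.norm (cesR f) ≤
          X.norm ((I ∩ Set.Ici a).indicator fun x => 1/x) *
            (∫⁻ t in I, ENNReal.ofReal |f t|).toReal := by
  obtain ⟨f0, hf0m, ⟨hf0fin, hf0X⟩, hf0ne⟩ := hne
  have hImeas : MeasurableSet I := by rcases hI with h | h <;> simp [h]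
  have hIsub : I ⊆ Set.Ici 0 := by
    rcases hI with h | h
    · rw [h]; intro x hx; exact hx.1
    · rw [h]
  have haeI : ∀ᵐ x ∂(volume.restrict I), x ∈ I := ae_restrict_mem hImeas
  have haepos : ∀ᵐ x ∂(volume.restrict I), 0 < x := by
    have h0 : ∀ᵐ x : ℝ, x ≠ (0:ℝ) := by
      rw [ae_iff]; simpa using measure_singleton (0:ℝ)
    filter_upwards [haeI, ae_restrict_of_ae h0] with x hxI hx0
    exact lt_of_le_of_ne (hIsub hxI) (Ne.symm hx0)
  have hg0m : Measurable fun t => ENNReal.ofReal |f0 t| := hf0m.abs.ennreal_ofReal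
  have hne0 : volume ({x | f0 x ≠ 0} ∩ I) ≠ 0 := by
    intro h
    exact hf0ne (ae_iff.mpr (by rwa [Measure.restrict_apply' hImeas]))
  have hgeq : ∀ x : ℝ, (ENNReal.ofReal |f0 x| = 0) ↔ f0 x = 0 := fun x => by
    simp [ENNReal.ofReal_eq_zero, abs_nonpos_iff]
  -- find `a` in the interior of `I` with positive mass of `f0` on `(0, a]`
  have hex : ∃ a : ℝ, 0 < a ∧ a ∈ interior I ∧
      0 < ∫⁻ t in Set.Ioc (0:ℝ) a, ENNReal.ofReal |f0 t| := by
    by_contra hcon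
    push_neg at hcon
    apply hne0
    have hnull : ∀ a : ℝ, 0 < a → a ∈ interior I →
        volume ({x | f0 x ≠ 0} ∩ Set.Ioc 0 a) = 0 := by
      intro a ha haI
      have h0 : ∫⁻ t in Set.Ioc (0:ℝ) a, ENNReal.ofReal |f0 t| = 0 :=
        le_antisymm (hcon a ha haI) zero_le
      have h1 : volume.restrict (Set.Ioc (0:ℝ) a) {x | ¬ ENNReal.ofReal |f0 x| = 0} = 0 :=
        ae_iff.mp ((lintegral_eq_zero_iff hg0m).mp h0)
      rw [Measure.restrict_apply' measurableSet_Ioc] at h1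
      refine measure_mono_null (fun x hx => ?_) h1
      exact ⟨fun h => hx.1 ((hgeq x).mp h), hx.2⟩
    rcases hI with h | h
    · have hsub : {x | f0 x ≠ 0} ∩ I ⊆ ({0, 1} : Set ℝ) ∪
          ⋃ n : ℕ, ({x | f0 x ≠ 0} ∩ Set.Ioc 0 (1 - 1/((n:ℝ)+2))) := by
        rintro x ⟨hx, hxI⟩
        rw [h] at hxI
        rcases eq_or_lt_of_le hxI.1 with h0 | h0
        · exact Or.inl (Or.inl h0.symm)
        rcases eq_or_lt_of_le hxI.2 with h1 | h1
        · exact Or.inl (Or.inr h1)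
        obtain ⟨n, hn⟩ := exists_nat_one_div_lt (by linarith : (0:ℝ) < 1 - x)
        refine Or.inr (Set.mem_iUnion.mpr ⟨n, hx, h0, ?_⟩)
        have h2 : 1/((n:ℝ)+2) ≤ 1/((n:ℝ)+1) := by
          apply one_div_le_one_div_of_le
          · positivity
          · linarith
        linarith
      refine measure_mono_null hsub
        (measure_union_null (Set.Countable.measure_zero (Set.to_countable _) _)
          (measure_iUnion_null fun n => ?_))
      have h2 : (0:ℝ) < 1 - 1/((n:ℝ)+2) := by
        have : 1/((n:ℝ)+2) < 1 := by
          rw [div_lt_one (by positivity)]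
          linarith [Nat.cast_nonneg (α := ℝ) n]
        linarith
      apply hnull _ h2
      rw [h, interior_Icc]
      constructor
      · exact h2
      · have : (0:ℝ) < 1/((n:ℝ)+2) := by positivity
        linarith
    · have hsub : {x | f0 x ≠ 0} ∩ I ⊆ ({0} : Set ℝ) ∪
          ⋃ n : ℕ, ({x | f0 x ≠ 0} ∩ Set.Ioc 0 ((n:ℝ)+1)) := by
        rintro x ⟨hx, hxI⟩
        rw [h] at hxI
        rcases eq_or_lt_of_le (Set.mem_Ici.mp hxI) with h0 | h0
        · exact Or.inl h0.symm
        obtain ⟨n, hn⟩ := exists_nat_gt x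
        exact Or.inr (Set.mem_iUnion.mpr ⟨n, hx, h0, by linarith⟩)
      refine measure_mono_null hsub
        (measure_union_null (measure_singleton _) (measure_iUnion_null fun n => ?_))
      apply hnull _ (by positivity)
      rw [h, interior_Ici]
      exact Set.mem_Ioi.mpr (by positivity)
  obtain ⟨a, ha0, haint, hapos⟩ := hex
  -- choose b, b' with a < b < b' and Icc a b' ⊆ I, b ∈ interior I
  obtain ⟨b, b', hab, hbb', hbint, hsubI⟩ :
      ∃ b b' : ℝ, a < b ∧ b < b' ∧ b ∈ interior I ∧ Set.Icc a b' ⊆ I := by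
    rcases hI with h | h
    · rw [h, interior_Icc] at haint ⊢
      refine ⟨(a+1)/2, ((a+1)/2+1)/2, by linarith [haint.2], by linarith [haint.2],
        ⟨by linarith [haint.1], by linarith [haint.2]⟩, ?_⟩
      intro x hx
      exact ⟨le_trans ha0.le hx.1, by nlinarith [haint.2, hx.2]⟩
    · rw [h, interior_Ici] at haint ⊢
      exact ⟨a+1, a+2, by linarith, by linarith, Set.mem_Ioi.mpr (by linarith),
        fun x hx => Set.mem_Ici.mpr (le_trans ha0.le hx.1)⟩
  have hIab : Set.Ioc a b ⊆ I := fun x hx =>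
    hsubI (Set.mem_Icc.mpr ⟨hx.1.le, hx.2.trans hbb'.le⟩)
  have hIbb' : Set.Ioc b b' ⊆ I := fun x hx =>
    hsubI (Set.mem_Icc.mpr ⟨(hab.trans hx.1).le, hx.2⟩)
  -- finiteness of the mass constant
  obtain ⟨x0, hx0S, hx0fin⟩ := exists_mem_ae_aux hImeas hf0fin hIab
    (by rw [Real.volume_Ioc]; simp only [ne_eq, ENNReal.ofReal_eq_zero, not_le]; linarith)
  have hcENNfin : (∫⁻ t in Set.Ioc (0:ℝ) a, ENNReal.ofReal |f0 t|) ≠ ⊤ := by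
    intro htop
    apply hx0fin
    have hx0pos : 0 < x0 := ha0.trans hx0S.1
    have hmono : (∫⁻ t in Set.Ioc (0:ℝ) a, ENNReal.ofReal |f0 t|) ≤
        ∫⁻ t in Set.Ioc (0:ℝ) x0, ENNReal.ofReal |f0 t| :=
      lintegral_mono_set (Set.Ioc_subset_Ioc_right hx0S.1.le)
    rw [htop, top_le_iff] at hmono
    rw [ces, hmono]
    exact ENNReal.mul_top (by simp only [ne_eq, ENNReal.ofReal_eq_zero, not_le]; positivity)
  set c : ℝ := (∫⁻ t in Set.Ioc (0:ℝ) a, ENNReal.ofReal |f0 t|).toReal with hcdef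
  have hc_pos : 0 < c := ENNReal.toReal_pos (ne_of_gt hapos) hcENNfin
  -- membership of the indicators
  have hmem_a : X.Mem ((I ∩ Set.Ici a).indicator fun x => 1/x) := by
    apply X.ideal_mem _ (c⁻¹ • cesR f0) ?_ (X.smul_mem c⁻¹ _ hf0X)
    filter_upwards [haeI, haepos, hf0fin] with x hxI hx0 hxfin
    by_cases hxa : x ∈ I ∩ Set.Ici a
    · rw [Set.indicator_of_mem hxa]
      have h1 : ENNReal.ofReal (1/x) * (∫⁻ t in Set.Ioc (0:ℝ) a, ENNReal.ofReal |f0 t|) ≤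
          ces f0 x :=
        mul_le_mul_right (lintegral_mono_set (Set.Ioc_subset_Ioc_right hxa.2)) _
      have h2 : (1/x) * c ≤ cesR f0 x := by
        have h3 := ENNReal.toReal_mono hxfin h1
        rwa [ENNReal.toReal_mul, ENNReal.toReal_ofReal (by positivity)] at h3
      have h3 : (1/x) ≤ c⁻¹ * cesR f0 x := by
        rw [inv_mul_eq_div, le_div_iff₀ hc_pos]
        exact h2
      have h4 : |(c⁻¹ • cesR f0) x| = c⁻¹ * cesR f0 x := by
        simp only [Pi.smul_apply, smul_eq_mul]
        exact abs_of_nonneg (mul_nonneg (inv_nonneg.2 hc_pos.le) ENNReal.toReal_nonneg)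
      rw [h4, abs_of_pos (by positivity : (0:ℝ) < 1/x)]
      exact h3
    · rw [Set.indicator_of_notMem hxa, abs_zero]
      exact abs_nonneg _
  have hmem_b : X.Mem ((I ∩ Set.Ici b).indicator fun x => 1/x) := by
    apply X.ideal_mem _ _ (Filter.Eventually.of_forall fun x => ?_) hmem_a
    by_cases hx : x ∈ I ∩ Set.Ici b
    · rw [Set.indicator_of_mem hx,
        Set.indicator_of_mem (Set.mem_inter hx.1 (Set.mem_Ici.mpr (le_trans hab.le hx.2)))]
    · rw [Set.indicator_of_notMem hx, abs_zero]
      exact abs_nonneg _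
  refine ⟨a, b, ha0, hab, hbint, hmem_a, hmem_b, ?_⟩
  intro f hfm ⟨hffin, hfXmem⟩ hsupp
  have hsupp_g : ∀ x : ℝ, x ∉ Set.Icc a b → ENNReal.ofReal |f x| = 0 := by
    intro x hx
    have : f x = 0 := Function.notMem_support.mp fun hs => hx (hsupp hs)
    simp [this]
  have hsuppset : (Function.support fun t => ENNReal.ofReal |f t|) ⊆ Set.Icc a b := by
    intro x hx
    by_contra hmem
    exact hx (hsupp_g x hmem)
  -- the L¹ mass
  have hL'I : (∫⁻ t in I, ENNReal.ofReal |f t|) = ∫⁻ t, ENNReal.ofReal |f t| := by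
    rw [← lintegral_indicator hImeas,
      Set.indicator_eq_self.mpr (hsuppset.trans fun x hx =>
        hsubI (Set.mem_Icc.mpr ⟨hx.1, hx.2.trans hbb'.le⟩))]
  have hL'x : ∀ x : ℝ, b ≤ x →
      (∫⁻ t in Set.Ioc (0:ℝ) x, ENNReal.ofReal |f t|) = ∫⁻ t, ENNReal.ofReal |f t| := by
    intro x hx
    rw [← lintegral_indicator measurableSet_Ioc,
      Set.indicator_eq_self.mpr (hsuppset.trans fun t ht =>
        Set.mem_Ioc.mpr ⟨ha0.trans_le ht.1, ht.2.trans hx⟩)]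
  obtain ⟨x1, hx1S, hx1fin⟩ := exists_mem_ae_aux hImeas hffin hIbb'
    (by rw [Real.volume_Ioc]; simp only [ne_eq, ENNReal.ofReal_eq_zero, not_le]; linarith)
  have hx1pos : 0 < x1 := ha0.trans (hab.trans hx1S.1)
  have hL'fin : (∫⁻ t, ENNReal.ofReal |f t|) ≠ ⊤ := by
    intro htop
    apply hx1fin
    rw [ces, hL'x x1 hx1S.1.le, htop]
    exact ENNReal.mul_top (by simp only [ne_eq, ENNReal.ofReal_eq_zero, not_le]; positivity)
  constructor
  · -- lower bound
    have hlow : ∀ᵐ x ∂(volume.restrict I),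
        |((∫⁻ t, ENNReal.ofReal |f t|).toReal •
          ((I ∩ Set.Ici b).indicator fun x => 1/x)) x| ≤ |cesR f x| := by
      filter_upwards [haeI, haepos] with x hxI hx0
      by_cases hx : x ∈ I ∩ Set.Ici b
      · have hval : cesR f x = (∫⁻ t, ENNReal.ofReal |f t|).toReal * (1/x) := by
          rw [cesR, ces, hL'x x hx.2, ENNReal.toReal_mul,
            ENNReal.toReal_ofReal (by positivity), mul_comm]
        rw [Pi.smul_apply, Set.indicator_of_mem hx, smul_eq_mul, hval]
      · rw [Pi.smul_apply, Set.indicator_of_notMem hx, smul_zero, abs_zero]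
        exact abs_nonneg _
    have h1 := X.ideal_norm _ _ hlow hfXmem
    rw [X.norm_smul, abs_of_nonneg ENNReal.toReal_nonneg] at h1
    rw [hL'I, mul_comm]
    exact h1
  · -- upper bound
    have hup : ∀ᵐ x ∂(volume.restrict I),
        |cesR f x| ≤ |((∫⁻ t, ENNReal.ofReal |f t|).toReal •
          ((I ∩ Set.Ici a).indicator fun x => 1/x)) x| := by
      filter_upwards [haeI, haepos] with x hxI hx0
      by_cases hx : x ∈ I ∩ Set.Ici a
      · have hle : ces f x ≤ ENNReal.ofReal (1/x) * ∫⁻ t, ENNReal.ofReal |f t| :=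
          mul_le_mul_right (setLIntegral_le_lintegral _ _) _
        have hfin : ENNReal.ofReal (1/x) * (∫⁻ t, ENNReal.ofReal |f t|) ≠ ⊤ :=
          ENNReal.mul_ne_top ENNReal.ofReal_ne_top hL'fin
        have h2 : cesR f x ≤ (∫⁻ t, ENNReal.ofReal |f t|).toReal * (1/x) := by
          have h3 := ENNReal.toReal_mono hfin hle
          rwa [ENNReal.toReal_mul, ENNReal.toReal_ofReal (by positivity), mul_comm] at h3
        rw [Pi.smul_apply, Set.indicator_of_mem hx, smul_eq_mul,
          abs_of_nonneg (show (0:ℝ) ≤ cesR f x from ENNReal.toReal_nonneg),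
          abs_of_nonneg (mul_nonneg ENNReal.toReal_nonneg (by positivity : (0:ℝ) ≤ 1/x))]
        exact h2
      · have hxa : x < a := by
          by_contra hge
          exact hx ⟨hxI, le_of_not_gt hge⟩
        have hzero : (∫⁻ t in Set.Ioc (0:ℝ) x, ENNReal.ofReal |f t|) = 0 := by
          rw [setLIntegral_congr_fun measurableSet_Ioc
            (fun t ht =>
              hsupp_g t fun hmem => absurd hmem.1 (not_le.mpr (ht.2.trans_lt hxa)))]
          exact lintegral_zero
        rw [cesR, ces, hzero, mul_zero, ENNReal.toReal_zero, abs_zero]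
        exact abs_nonneg _
    have h1 := X.ideal_norm _ _ hup
      (X.smul_mem (∫⁻ t, ENNReal.ofReal |f t|).toReal _ hmem_a)
    rw [X.norm_smul, abs_of_nonneg ENNReal.toReal_nonneg] at h1
    rw [hL'I, mul_comm]
    exact h1
end
end

section
/- Let X be a Banach function space on I such that the Copson space C*X is nontrivial. Then there exist 0 < a < b < m(I) such that for all f ∈ C*X with supp(f) ⊂ [a,b]: ‖χ_{[0,a]}‖_X · ‖f‖_{L¹(1/t)} ≤ ‖f‖_{C*X} ≤ ‖χ_{[0,b]}‖_X · ‖f‖_{L¹(1/t)}, where ‖f‖_{L¹(1/t)} = ∫_I |f(t)|/t dt. -/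
open MeasureTheory Filter Set
open scoped ENNReal

noncomputable section

/-- If a property holds a.e. and a set has nonzero measure, the property holds at some
point of the set. -/
lemma exists_mem_of_ae' {α : Type*} {m : MeasurableSpace α} {μ : Measure α} {P : α → Prop}
    (h : ∀ᵐ x ∂μ, P x) {s : Set α} (hs : μ s ≠ 0) : ∃ x ∈ s, P x := by
  by_contra hc
  push_neg at hc
  exact hs (measure_mono_null (fun x hx => hc x hx) (ae_iff.mp h))

/-- If the support of the integrand lies in `Icc a b`, restrict the integration set. -/
lemma lintegral_inter_Icc {g : ℝ → ℝ≥0∞} {a b : ℝ} (hg0 : ∀ t, t ∉ Set.Icc a b → g t = 0)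
    (s : Set ℝ) :
    ∫⁻ t in s, g t = ∫⁻ t in s ∩ Set.Icc a b, g t := by
  have hgi : ∀ t, g t = (Set.Icc a b).indicator g t := by
    intro t
    by_cases h : t ∈ Set.Icc a b
    · simp [Set.indicator_of_mem h]
    · simp [Set.indicator_of_notMem h, hg0 t h]
  calc ∫⁻ t in s, g t = ∫⁻ t in s, (Set.Icc a b).indicator g t := by
        exact lintegral_congr fun t => hgi t
    _ = ∫⁻ t in Set.Icc a b, g t ∂(volume.restrict s) :=
        lintegral_indicator measurableSet_Icc _
    _ = ∫⁻ t in s ∩ Set.Icc a b, g t := by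
        rw [Measure.restrict_restrict measurableSet_Icc, Set.inter_comm]

/-- Lemma 4.2: if `C*X ≠ {0}`, there are `0 < a < b < m(I)` such that for all `f ∈ C*X`
supported in `[a,b]`:
`‖χ_{[0,a]}‖_X ‖f‖_{L¹(1/t)} ≤ ‖f‖_{C*X} ≤ ‖χ_{[0,b]}‖_X ‖f‖_{L¹(1/t)}`. -/
theorem copson_middle_L1 (I : Set ℝ) (hI : I = Set.Icc 0 1 ∨ I = Set.Ici 0)
    (X : BanachFunctionSpace I)
    (hne : ∃ f : ℝ → ℝ, Measurable f ∧ MemCopX I X f ∧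
        ¬ (∀ᵐ x ∂(volume.restrict I), f x = 0)) :
    ∃ a b : ℝ, 0 < a ∧ a < b ∧ b ∈ interior I ∧
      X.Mem ((Set.Icc (0:ℝ) a).indicator fun _ => (1:ℝ)) ∧
      X.Mem ((Set.Icc (0:ℝ) b).indicator fun _ => (1:ℝ)) ∧
      ∀ f : ℝ → ℝ, Measurable f → MemCopX I X f → Function.support f ⊆ Set.Icc a b →
        X.norm ((Set.Icc (0:ℝ) a).indicator fun _ => (1:ℝ)) *
            (∫⁻ t in I, ENNReal.ofReal (|f t| / t)).toReal ≤ X.norm (copR I f) ∧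
        X.norm (copR I f) ≤
          X.norm ((Set.Icc (0:ℝ) b).indicator fun _ => (1:ℝ)) *
            (∫⁻ t in I, ENNReal.ofReal (|f t| / t)).toReal := by
  obtain ⟨f₀, hf₀m, ⟨hf₀fin, hf₀mem⟩, hf₀ne⟩ := hne
  have hImeas : MeasurableSet I := by
    rcases hI with h | h <;> rw [h]
    exacts [measurableSet_Icc, measurableSet_Ici]
  have hIsub : I ⊆ Set.Ici 0 := by
    rcases hI with h | h
    · rw [h]; exact fun x hx => hx.1
    · rw [h]
  set μ := volume.restrict I with hμ
  -- the set where f₀ is nonzero has positive measure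
  set S' : Set ℝ := {x | f₀ x ≠ 0} ∩ I with hS'
  have hS'meas : MeasurableSet S' :=
    ((measurableSet_singleton (0:ℝ)).preimage hf₀m).compl.inter hImeas
  have hS'pos : volume S' ≠ 0 := by
    intro h0
    apply hf₀ne
    rw [ae_iff, hμ, Measure.restrict_apply' hImeas]
    exact measure_mono_null (fun x hx => hx) h0
  -- find n with positive measure away from 0
  obtain ⟨n, hn⟩ : ∃ n : ℕ, volume (S' ∩ Set.Ici (1/(n+1) : ℝ)) ≠ 0 := by
    by_contra h
    push_neg at h
    apply hS'pos
    have hcover : S' ⊆ {(0:ℝ)} ∪ ⋃ n : ℕ, (S' ∩ Set.Ici (1/(n+1) : ℝ)) := by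
      intro t ht
      have ht0 : (0:ℝ) ≤ t := hIsub ht.2
      rcases eq_or_lt_of_le ht0 with h0 | h0
      · exact Or.inl (by simp [← h0])
      · obtain ⟨k, hk⟩ := exists_nat_one_div_lt h0
        exact Or.inr (Set.mem_iUnion.mpr ⟨k, ht, le_of_lt hk⟩)
    refine measure_mono_null hcover ?_
    rw [measure_union_null_iff]
    exact ⟨measure_singleton 0, measure_iUnion_null fun k => h k⟩
  set b₀ : ℝ := min (1/(n+1) : ℝ) (1/2) with hb₀
  have hb₀pos : 0 < b₀ := by positivity
  have hb₀le : b₀ ≤ 1/2 := min_le_right _ _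
  have hnb₀ : volume (S' ∩ Set.Ici b₀) ≠ 0 := by
    intro h0
    exact hn (measure_mono_null (Set.inter_subset_inter_right _
      (Set.Ici_subset_Ici.mpr (min_le_left _ _))) h0)
  -- Copson of f₀ is positive at b₀
  have hg₀meas : Measurable (fun t => ENNReal.ofReal (|f₀ t| / t)) :=
    (hf₀m.abs.div measurable_id).ennreal_ofReal
  have hcopb₀ : 0 < cop I f₀ b₀ := by
    rw [cop, lintegral_pos_iff_support hg₀meas]
    have hsub : S' ∩ Set.Ici b₀ ⊆ Function.support (fun t => ENNReal.ofReal (|f₀ t| / t)) := by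
      intro t ht
      have htpos : 0 < t := lt_of_lt_of_le hb₀pos ht.2
      have : 0 < |f₀ t| / t := div_pos (abs_pos.mpr ht.1.1) htpos
      simp [Function.mem_support, ENNReal.ofReal_eq_zero, not_le, this]
    refine lt_of_lt_of_le ?_ (measure_mono hsub)
    have hsub2 : S' ∩ Set.Ici b₀ ⊆ I ∩ Set.Ici b₀ := fun t ht => ⟨ht.1.2, ht.2⟩
    rw [Measure.restrict_apply' (hImeas.inter measurableSet_Ici),
      Set.inter_eq_self_of_subset_left hsub2]
    exact pos_iff_ne_zero.mpr hnb₀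
  -- find b ∈ (0, b₀] where cop f₀ is finite
  have hIoc : ∀ r : ℝ, 0 < r → r ≤ 1 → μ (Set.Ioc 0 r) ≠ 0 := by
    intro r hr hr1
    have hsubI : Set.Ioc (0:ℝ) r ⊆ I := by
      rcases hI with h | h <;> rw [h]
      · exact fun t ht => ⟨le_of_lt ht.1, le_trans ht.2 hr1⟩
      · exact fun t ht => le_of_lt ht.1
    rw [hμ, Measure.restrict_apply measurableSet_Ioc,
      Set.inter_eq_self_of_subset_left hsubI, Real.volume_Ioc]
    simp [hr, sub_pos, ne_of_gt hr]
  obtain ⟨b, hbmem, hbfin⟩ := exists_mem_of_ae' hf₀fin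
    (hIoc b₀ hb₀pos (by linarith))
  have hb0 : 0 < b := hbmem.1
  have hbb₀ : b ≤ b₀ := hbmem.2
  have hcopb : 0 < cop I f₀ b :=
    lt_of_lt_of_le hcopb₀ (lintegral_mono_set
      (Set.inter_subset_inter_right _ (Set.Ici_subset_Ici.mpr hbb₀)))
  set c : ℝ := (cop I f₀ b).toReal with hc
  have hcpos : 0 < c := ENNReal.toReal_pos (ne_of_gt hcopb) hbfin
  -- χ_{[0,b]} ∈ X
  set χb : ℝ → ℝ := (Set.Icc (0:ℝ) b).indicator fun _ => (1:ℝ) with hχb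
  have hmemcχb : X.Mem (c • χb) := by
    refine X.ideal_mem _ (copR I f₀) ?_ hf₀mem
    filter_upwards [hf₀fin] with x hx
    by_cases hxm : x ∈ Set.Icc (0:ℝ) b
    · have h1 : cop I f₀ b ≤ cop I f₀ x :=
        lintegral_mono_set (Set.inter_subset_inter_right _ (Set.Ici_subset_Ici.mpr hxm.2))
      have h2 : c ≤ copR I f₀ x := ENNReal.toReal_mono hx h1
      rw [hχb]
      simp only [Pi.smul_apply, Set.indicator_of_mem hxm, smul_eq_mul, mul_one]
      rw [abs_of_pos hcpos, abs_of_nonneg (show (0:ℝ) ≤ copR I f₀ x from ENNReal.toReal_nonneg)]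
      exact h2
    · rw [hχb]
      simp only [Pi.smul_apply, Set.indicator_of_notMem hxm, smul_eq_mul, mul_zero]
      simp [abs_nonneg]
  have hχbX : X.Mem χb := by
    have h1 := X.smul_mem c⁻¹ _ hmemcχb
    have h2 : c⁻¹ • (c • χb) = χb := by
      rw [smul_smul, inv_mul_cancel₀ (ne_of_gt hcpos), one_smul]
    rwa [h2] at h1
  -- χ_{[0,b/2]} ∈ X
  set a : ℝ := b/2 with ha
  have ha0 : 0 < a := by positivity
  have hab : a < b := by rw [ha]; linarith
  set χa : ℝ → ℝ := (Set.Icc (0:ℝ) a).indicator fun _ => (1:ℝ) with hχa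
  have hχaX : X.Mem χa := by
    refine X.ideal_mem _ χb (Filter.Eventually.of_forall fun x => ?_) hχbX
    by_cases hxm : x ∈ Set.Icc (0:ℝ) a
    · have hxm' : x ∈ Set.Icc (0:ℝ) b := ⟨hxm.1, le_trans hxm.2 (le_of_lt hab)⟩
      rw [hχa, hχb, Set.indicator_of_mem hxm, Set.indicator_of_mem hxm']
    · rw [hχa, Set.indicator_of_notMem hxm]
      simp [abs_nonneg]
  have hbint : b ∈ interior I := by
    rcases hI with h | h <;> rw [h]
    · rw [interior_Icc]; exact ⟨hb0, by linarith⟩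
    · rw [interior_Ici]; exact hb0
  refine ⟨a, b, ha0, hab, hbint, hχaX, hχbX, ?_⟩
  intro f hfm hmem hsupp
  set g : ℝ → ℝ≥0∞ := fun t => ENNReal.ofReal (|f t| / t) with hgdef
  have hg0 : ∀ t, t ∉ Set.Icc a b → g t = 0 := by
    intro t ht
    have : f t = 0 := by
      by_contra h
      exact ht (hsupp (Function.mem_support.mpr h))
    simp [hgdef, this]
  -- key identities for cop
  have h_eq_total : ∀ x : ℝ, x ≤ a → cop I f x = ∫⁻ t in I, g t := by
    intro x hx
    rw [cop]
    rw [show (∫⁻ t in I ∩ Set.Ici x, ENNReal.ofReal (|f t| / t)) = ∫⁻ t in I ∩ Set.Ici x, g t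
      from rfl, lintegral_inter_Icc hg0 (I ∩ Set.Ici x), lintegral_inter_Icc hg0 I]
    congr 1
    have hsub3 : Set.Icc a b ⊆ Set.Ici x := fun t ht => le_trans hx ht.1
    rw [Set.inter_assoc, Set.inter_eq_self_of_subset_right hsub3]
  have h_le_total : ∀ x : ℝ, cop I f x ≤ ∫⁻ t in I, g t := by
    intro x
    exact lintegral_mono_set Set.inter_subset_left
  have h_zero : ∀ x : ℝ, b < x → cop I f x = 0 := by
    intro x hx
    rw [cop]
    rw [show (∫⁻ t in I ∩ Set.Ici x, ENNReal.ofReal (|f t| / t)) = ∫⁻ t in I ∩ Set.Ici x, g t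
      from rfl, lintegral_inter_Icc hg0 (I ∩ Set.Ici x)]
    have hempty : (I ∩ Set.Ici x) ∩ Set.Icc a b = ∅ := by
      ext t
      simp only [Set.mem_inter_iff, Set.mem_Ici, Set.mem_Icc, Set.mem_empty_iff_false,
        iff_false, not_and]
      intro h1 h2 h3
      linarith [h1.2]
    rw [hempty]
    simp
  -- the total integral is finite
  have hTfin : (∫⁻ t in I, g t) ≠ ⊤ := by
    obtain ⟨x, hxmem, hxfin⟩ := exists_mem_of_ae' hmem.1 (hIoc a ha0 (by
      rcases hI with h | h <;> nlinarith))
    rw [← h_eq_total x hxmem.2]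
    exact hxfin
  set L : ℝ := (∫⁻ t in I, g t).toReal with hL
  have hLnonneg : 0 ≤ L := ENNReal.toReal_nonneg
  constructor
  · -- lower bound
    have h1 : X.norm (L • χa) ≤ X.norm (copR I f) := by
      refine X.ideal_norm _ _ (Filter.Eventually.of_forall fun x => ?_) hmem.2
      by_cases hxm : x ∈ Set.Icc (0:ℝ) a
      · have : copR I f x = L := by rw [copR, h_eq_total x hxm.2]
        rw [hχa]
        simp only [Pi.smul_apply, Set.indicator_of_mem hxm, smul_eq_mul, mul_one, this]
        exact le_refl _
      · rw [hχa]
        simp only [Pi.smul_apply, Set.indicator_of_notMem hxm, smul_eq_mul, mul_zero]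
        simp [abs_nonneg]
    rw [X.norm_smul, abs_of_nonneg hLnonneg, mul_comm] at h1
    exact h1
  · -- upper bound
    have h2 : X.norm (copR I f) ≤ X.norm (L • χb) := by
      refine X.ideal_norm _ _ ?_ (X.smul_mem L _ hχbX)
      filter_upwards [ae_restrict_mem hImeas] with x hxI
      have hx0 : (0:ℝ) ≤ x := hIsub hxI
      by_cases hxb : x ≤ b
      · have hxm : x ∈ Set.Icc (0:ℝ) b := ⟨hx0, hxb⟩
        have hcle : copR I f x ≤ L := ENNReal.toReal_mono hTfin (h_le_total x)
        rw [hχb]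
        simp only [Pi.smul_apply, Set.indicator_of_mem hxm, smul_eq_mul, mul_one]
        rw [abs_of_nonneg (show (0:ℝ) ≤ copR I f x from ENNReal.toReal_nonneg),
          abs_of_nonneg hLnonneg]
        exact hcle
      · have : copR I f x = 0 := by rw [copR, h_zero x (lt_of_not_ge hxb)]; simp
        rw [this]
        simp only [abs_zero]; positivity
    rw [X.norm_smul, abs_of_nonneg hLnonneg, mul_comm] at h2
    exact h2
end
end

section
/- Let X be a Banach function space on [0,∞) such that (1/x)χ_{(1,∞)}(x) ∈ X. Then for f ∈ L⁰[0,1], f belongs to CX[0,∞)|_{[0,1]} (i.e., C(|f|χ_{[0,1]}) ∈ X[0,∞)) if and only if f ∈ C(X[0,∞)|_{[0,1]}) ∩ L¹[0,1], with equivalence of norms: max{‖(C|f|)χ_{(0,1]}‖_X, ‖(1/x)χ_{(1,∞)}(x)‖_X‖f‖_{L¹}} ≤ ‖C(|f|χ_{[0,1]})‖_X ≤ ‖(C|f|)χ_{(0,1]}‖_X + ‖(1/x)χ_{(1,∞)}(x)‖_X‖f‖_{L¹}. -/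
open MeasureTheory Filter Set
open scoped ENNReal

noncomputable section

/-- For `X` a Banach function space on `[0,∞)` with `(1/x)χ_{(1,∞)} ∈ X` and `f` supported
in `[0,1]`: `f ∈ CX[0,∞)|_{[0,1]}` iff `f ∈ C(X[0,∞)|_{[0,1]}) ∩ L¹[0,1]`, with the stated
equivalence of norms. -/
theorem cesaro_truncation (X : BanachFunctionSpace (Set.Ici (0:ℝ)))
    (hind : X.Mem ((Set.Ioi (1:ℝ)).indicator fun x => 1/x))
    (f : ℝ → ℝ) (hf : Measurable f) (hsupp : Function.support f ⊆ Set.Icc 0 1) :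
    (MemCX (Set.Ici 0) X f ↔
      ((∀ᵐ x ∂(volume.restrict (Set.Ici (0:ℝ))), x ∈ Set.Ioc (0:ℝ) 1 → ces f x ≠ ⊤) ∧
        X.Mem ((Set.Ioc (0:ℝ) 1).indicator (cesR f)) ∧
        (∫⁻ t in Set.Icc (0:ℝ) 1, ENNReal.ofReal |f t|) ≠ ⊤)) ∧
    (MemCX (Set.Ici 0) X f →
      (max (X.norm ((Set.Ioc (0:ℝ) 1).indicator (cesR f)))
          (X.norm ((Set.Ioi (1:ℝ)).indicator fun x => 1/x) *
            (∫⁻ t in Set.Icc (0:ℝ) 1, ENNReal.ofReal |f t|).toReal)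
        ≤ X.norm (cesR f)) ∧
      X.norm (cesR f) ≤
        X.norm ((Set.Ioc (0:ℝ) 1).indicator (cesR f)) +
          X.norm ((Set.Ioi (1:ℝ)).indicator fun x => 1/x) *
            (∫⁻ t in Set.Icc (0:ℝ) 1, ENNReal.ofReal |f t|).toReal) := by
  set L : ℝ≥0∞ := ∫⁻ t in Set.Icc (0:ℝ) 1, ENNReal.ofReal |f t| with hLdef
  have hf0 : ∀ t, t ∉ Set.Icc (0:ℝ) 1 → f t = 0 := by
    intro t ht
    by_contra h
    exact ht (hsupp (Function.mem_support.2 h))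
  have hIoc1 : (∫⁻ t in Set.Ioc (0:ℝ) 1, ENNReal.ofReal |f t|) = L := by
    rw [hLdef, Measure.restrict_congr_set Ioc_ae_eq_Icc]
  have hInt : ∀ x : ℝ, 1 ≤ x → (∫⁻ t in Set.Ioc (0:ℝ) x, ENNReal.ofReal |f t|) = L := by
    intro x hx
    rw [← Set.Ioc_union_Ioc_eq_Ioc zero_le_one hx,
      lintegral_union measurableSet_Ioc (Set.Ioc_disjoint_Ioc_of_le le_rfl), hIoc1]
    have h0 : (∫⁻ t in Set.Ioc (1:ℝ) x, ENNReal.ofReal |f t|) = 0 := by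
      rw [setLIntegral_congr_fun_ae measurableSet_Ioc
        (ae_of_all _ (fun t ht => by
          rw [hf0 t (fun h => absurd h.2 (not_le.2 ht.1))]
          simp) : ∀ᵐ t ∂volume, t ∈ Set.Ioc (1:ℝ) x → ENNReal.ofReal |f t| = 0)]
      simp
    rw [h0, add_zero]
  have hces_gt1 : ∀ x : ℝ, 1 < x → ces f x = ENNReal.ofReal (1/x) * L := by
    intro x hx; rw [ces, hInt x hx.le]
  have hces_le0 : ∀ x : ℝ, x ≤ 0 → ces f x = 0 := by
    intro x hx
    rw [ces, Set.Ioc_eq_empty (by exact fun h => absurd hx (not_le.2 h)), Measure.restrict_empty]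
    simp
  -- key: L = ⊤ is incompatible with ae finiteness
  have hLfin : (∀ᵐ x ∂(volume.restrict (Set.Ici (0:ℝ))), ces f x ≠ ⊤) → L ≠ ⊤ := by
    intro hfin hL
    have hsub : Set.Ioi (1:ℝ) ⊆ {x | ¬ ces f x ≠ ⊤} := by
      intro x hx
      simp only [Set.mem_setOf_eq, not_not]
      rw [hces_gt1 x hx, hL, ENNReal.mul_top]
      simp only [ne_eq, ENNReal.ofReal_eq_zero, not_le]
      exact one_div_pos.2 (lt_trans zero_lt_one hx)
    have h0 : (volume.restrict (Set.Ici (0:ℝ))) {x | ¬ ces f x ≠ ⊤} = 0 := hfin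
    have : (volume.restrict (Set.Ici (0:ℝ))) (Set.Ioi (1:ℝ)) = 0 :=
      measure_mono_null hsub h0
    have hss : Set.Ioi (1:ℝ) ∩ Set.Ici 0 = Set.Ioi 1 :=
      Set.inter_eq_left.2 (fun x hx => Set.mem_Ici.2 (le_of_lt (lt_of_le_of_lt zero_lt_one.le hx)))
    rw [Measure.restrict_apply measurableSet_Ioi, hss, Real.volume_Ioi] at this
    exact ENNReal.top_ne_zero this
  have hcesR_gt1 : L ≠ ⊤ → ∀ x : ℝ, 1 < x → cesR f x = L.toReal * (1/x) := by
    intro hL x hx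
    rw [cesR, hces_gt1 x hx, ENNReal.toReal_mul, ENNReal.toReal_ofReal (by positivity)]
    ring
  -- decomposition
  have hdec : L ≠ ⊤ → cesR f =
      (Set.Ioc (0:ℝ) 1).indicator (cesR f) + L.toReal • ((Set.Ioi (1:ℝ)).indicator fun x => 1/x) := by
    intro hL
    funext x
    simp only [Pi.add_apply, Pi.smul_apply, smul_eq_mul]
    rcases le_or_gt x 1 with hx1 | hx1
    · rcases le_or_gt x 0 with hx0 | hx0
      · rw [Set.indicator_of_notMem (fun h => absurd hx0 (not_le.2 h.1)),
          Set.indicator_of_notMem (fun h => absurd (Set.mem_Ioi.1 h) (not_lt.2 (hx0.trans zero_le_one)))]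
        rw [cesR, hces_le0 x hx0]
        simp
      · rw [Set.indicator_of_mem (Set.mem_Ioc.2 ⟨hx0, hx1⟩),
          Set.indicator_of_notMem (fun h => absurd (Set.mem_Ioi.1 h) (not_lt.2 hx1))]
        ring
    · rw [Set.indicator_of_notMem (fun h => absurd h.2 (not_le.2 hx1)),
        Set.indicator_of_mem (Set.mem_Ioi.2 hx1), hcesR_gt1 hL x hx1]
      ring
  have hcesR_nonneg : ∀ x, 0 ≤ cesR f x := fun x => ENNReal.toReal_nonneg
  -- pointwise bound: |indicator Ioc (cesR f)| ≤ |cesR f|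
  have hind_le : ∀ x, |(Set.Ioc (0:ℝ) 1).indicator (cesR f) x| ≤ |cesR f x| := by
    intro x
    by_cases hx : x ∈ Set.Ioc (0:ℝ) 1
    · rw [Set.indicator_of_mem hx]
    · rw [Set.indicator_of_notMem hx, abs_zero]; exact abs_nonneg _
  -- pointwise bound for the tail
  have htail_le : L ≠ ⊤ → ∀ x,
      |(L.toReal • ((Set.Ioi (1:ℝ)).indicator fun x => 1/x)) x| ≤ |cesR f x| := by
    intro hL x
    simp only [Pi.smul_apply, smul_eq_mul]
    by_cases hx : x ∈ Set.Ioi (1:ℝ)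
    · rw [Set.indicator_of_mem hx, hcesR_gt1 hL x hx]
    · rw [Set.indicator_of_notMem hx, mul_zero, abs_zero]; exact abs_nonneg _
  constructor
  · constructor
    · rintro ⟨hfin, hmem⟩
      refine ⟨hfin.mono fun x hx _ => hx, X.ideal_mem _ _ (ae_of_all _ hind_le) hmem,
        hLfin hfin⟩
    · rintro ⟨hae, hmemInd, hL⟩
      constructor
      · filter_upwards [hae, ae_restrict_mem measurableSet_Ici] with x hx hx0
        rcases lt_or_ge 1 x with hx1 | hx1
        · rw [hces_gt1 x hx1]
          exact ENNReal.mul_ne_top ENNReal.ofReal_ne_top hL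
        · rcases eq_or_lt_of_le (Set.mem_Ici.1 hx0) with h0 | h0
          · rw [hces_le0 x h0.symm.le]; exact ENNReal.zero_ne_top
          · exact hx (Set.mem_Ioc.2 ⟨h0, hx1⟩)
      · rw [hdec hL]
        exact X.add_mem _ _ hmemInd (X.smul_mem _ _ hind)
  · rintro ⟨hfin, hmem⟩
    have hL := hLfin hfin
    constructor
    · apply max_le
      · exact X.ideal_norm _ _ (ae_of_all _ hind_le) hmem
      · have := X.ideal_norm _ _ (ae_of_all _ (htail_le hL)) hmem
        rwa [X.norm_smul, abs_of_nonneg ENNReal.toReal_nonneg, mul_comm] at this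
    · calc X.norm (cesR f)
          = X.norm ((Set.Ioc (0:ℝ) 1).indicator (cesR f) +
              L.toReal • ((Set.Ioi (1:ℝ)).indicator fun x => 1/x)) := by rw [← hdec hL]
        _ ≤ X.norm ((Set.Ioc (0:ℝ) 1).indicator (cesR f)) +
              X.norm (L.toReal • ((Set.Ioi (1:ℝ)).indicator fun x => 1/x)) :=
            X.norm_add_le _ _ (X.ideal_mem _ _ (ae_of_all _ hind_le) hmem)
              (X.smul_mem _ _ hind)
        _ = _ := by
            rw [X.norm_smul, abs_of_nonneg ENNReal.toReal_nonneg, mul_comm]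
end
end

section
/- The function f(x) = 1/(1−x) on [0,1) satisfies ∫₀¹ ((1/x) ln(1/(1−x)))^q dx < ∞ for every 1 < q < ∞, while f ∉ L¹[0,1]. Consequently Cf ∈ L^q[0,1] for all 1 < q < ∞ although f ∉ L¹[0,1]. -/
open MeasureTheory Set

lemma aux_integrableOn_rpow_one_sub :
    IntegrableOn (fun x : ℝ => (1 - x) ^ (-(1/2) : ℝ)) (Set.Ioo (0:ℝ) 1) := by
  have h : IntervalIntegrable (fun x : ℝ => x ^ (-(1/2) : ℝ)) volume 0 1 :=
    intervalIntegral.intervalIntegrable_rpow' (by norm_num)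
  have h2 := (h.comp_sub_left 1).symm
  simp only [sub_zero, sub_self] at h2
  rw [intervalIntegrable_iff_integrableOn_Ioo_of_le (by norm_num : (0:ℝ) ≤ 1)] at h2
  exact h2

lemma aux_real_bound {q x : ℝ} (hq : 1 < q) (hx : x ∈ Set.Ioo (0:ℝ) 1) :
    ((1/x) * Real.log (1/(1-x))) ^ q ≤ 2 ^ q + (4*q) ^ q * (1-x) ^ (-(1/2) : ℝ) := by
  obtain ⟨hx0, hx1⟩ := hx
  have hu : (0:ℝ) < 1 - x := by linarith
  set L : ℝ := Real.log (1/(1-x)) with hL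
  have hL0 : 0 ≤ L := Real.log_nonneg (by rw [le_div_iff₀ hu]; linarith)
  have hg0 : 0 ≤ (1/x) * L := mul_nonneg (by positivity) hL0
  have hq0 : (0:ℝ) < q := by linarith
  have hLle : L ≤ x / (1-x) := by
    have := Real.log_le_sub_one_of_pos (show (0:ℝ) < 1/(1-x) by positivity)
    calc L ≤ 1/(1-x) - 1 := this
      _ = x / (1-x) := by field_simp; ring
  rcases le_or_gt x (1/2) with hhalf | hhalf
  · -- g ≤ 2
    have hg2 : (1/x) * L ≤ 2 := by
      have h1 : (1/x) * L ≤ (1/x) * (x/(1-x)) :=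
        mul_le_mul_of_nonneg_left hLle (by positivity)
      have h2 : (1/x) * (x/(1-x)) = 1/(1-x) := by field_simp
      have h3 : 1/(1-x) ≤ 2 := by
        rw [div_le_iff₀ hu]; linarith
      linarith
    have := Real.rpow_le_rpow hg0 hg2 hq0.le
    have hpos : 0 ≤ (4*q) ^ q * (1-x) ^ (-(1/2) : ℝ) := by positivity
    linarith
  · -- g ≤ 2 L ≤ 4q * (1-x)^(-1/(2q))
    have hinvx : 1/x ≤ 2 := by
      rw [div_le_iff₀ hx0]; linarith
    have hg2L : (1/x) * L ≤ 2 * L := mul_le_mul_of_nonneg_right hinvx hL0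
    set e : ℝ := -(1/(2*q)) with he
    have hue : (0:ℝ) < (1-x) ^ e := Real.rpow_pos_of_pos hu e
    have hLbound : L ≤ 2*q * (1-x) ^ e := by
      have hlog : Real.log ((1-x) ^ e) = e * Real.log (1-x) := Real.log_rpow hu e
      have hL' : L = -Real.log (1-x) := by
        rw [hL, one_div, Real.log_inv]
      have hlt : Real.log ((1-x) ^ e) ≤ (1-x) ^ e := by
        have := Real.log_le_sub_one_of_pos hue
        linarith
      have : e * Real.log (1-x) ≤ (1-x) ^ e := by rw [← hlog]; exact hlt
      have h2q : (0:ℝ) < 2*q := by linarith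
      calc L = (2*q) * (e * Real.log (1-x)) := by
              rw [hL', he, ← mul_assoc, mul_neg, mul_one_div_cancel h2q.ne', neg_one_mul]
        _ ≤ (2*q) * ((1-x) ^ e) := mul_le_mul_of_nonneg_left this h2q.le
    have hgle : (1/x) * L ≤ (4*q) * (1-x) ^ e := by
      calc (1/x) * L ≤ 2 * L := hg2L
        _ ≤ 2 * (2*q * (1-x) ^ e) := by
            exact mul_le_mul_of_nonneg_left hLbound (by norm_num)
        _ = (4*q) * (1-x) ^ e := by ring
    have hrhs0 : 0 ≤ (4*q) * (1-x) ^ e := by positivity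
    have hpow := Real.rpow_le_rpow hg0 hgle hq0.le
    have hmul : ((4*q) * (1-x) ^ e) ^ q = (4*q) ^ q * (1-x) ^ (-(1/2) : ℝ) := by
      rw [Real.mul_rpow (by positivity) hue.le, ← Real.rpow_mul hu.le]
      have hee : e * q = -(1/2 : ℝ) := by rw [he]; field_simp
      rw [hee]
    have h2q0 : (0:ℝ) ≤ 2 ^ q := by positivity
    rw [hmul] at hpow
    linarith

/-- The function `f(x) = 1/(1-x)` on `[0,1)` satisfies
`∫₀¹ ((1/x) ln(1/(1-x)))^q dx < ∞` for every `1 < q < ∞`, but `f ∉ L¹[0,1]`;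
so `Cf ∈ L^q[0,1]` for all `1 < q < ∞` although `f ∉ L¹[0,1]`. -/
theorem cesaro_Lq_not_subset_L1 :
    (∀ q : ℝ, 1 < q →
      (∫⁻ x in Set.Ioo (0:ℝ) 1,
          (ENNReal.ofReal ((1/x) * Real.log (1/(1-x)))) ^ q) < ⊤) ∧
    ((∫⁻ x in Set.Ioo (0:ℝ) 1, ENNReal.ofReal (1/(1-x))) = ⊤) := by
  constructor
  · intro q hq
    have hq0 : (0:ℝ) < q := by linarith
    -- the integrable bound
    set B : ℝ → ℝ := fun x => 2 ^ q + (4*q) ^ q * (1-x) ^ (-(1/2) : ℝ) with hB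
    have hBint : IntegrableOn B (Set.Ioo (0:ℝ) 1) := by
      apply Integrable.add
      · exact integrableOn_const (by simp [Real.volume_Ioo])
      · exact (aux_integrableOn_rpow_one_sub.const_mul _)
    have hBfin : (∫⁻ x in Set.Ioo (0:ℝ) 1, ENNReal.ofReal (B x)) < ⊤ :=
      hBint.setLIntegral_lt_top
    refine lt_of_le_of_lt ?_ hBfin
    apply lintegral_mono_ae
    filter_upwards [ae_restrict_mem measurableSet_Ioo] with x hx
    have hx0 := hx.1
    have hu : (0:ℝ) < 1 - x := by linarith [hx.2]
    have hg0 : 0 ≤ (1/x) * Real.log (1/(1-x)) := by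
      apply mul_nonneg (by positivity)
      exact Real.log_nonneg (by rw [le_div_iff₀ hu]; linarith [hx.2, hx.1])
    rw [ENNReal.ofReal_rpow_of_nonneg hg0 hq0.le]
    exact ENNReal.ofReal_le_ofReal (aux_real_bound hq hx)
  · -- the non-integrability part
    have hnotint : ¬ IntegrableOn (fun x : ℝ => 1/(1-x)) (Set.Ioo (0:ℝ) 1) := by
      intro h
      have h1 : IntervalIntegrable (fun x : ℝ => 1/(1-x)) volume 0 1 := by
        rwa [intervalIntegrable_iff_integrableOn_Ioo_of_le (by norm_num : (0:ℝ) ≤ 1)]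
      have h2 := h1.comp_sub_left 1
      simp only [sub_sub_cancel, sub_zero, sub_self, one_div] at h2
      rw [intervalIntegrable_inv_iff] at h2
      rcases h2 with h2 | h2
      · norm_num at h2
      · exact h2 (by norm_num)
    have hmeas : AEStronglyMeasurable (fun x : ℝ => 1/(1-x))
        (volume.restrict (Set.Ioo (0:ℝ) 1)) := by
      apply Measurable.aestronglyMeasurable
      simp only [one_div]
      exact (measurable_const.sub measurable_id).inv
    have hnn : 0 ≤ᵐ[volume.restrict (Set.Ioo (0:ℝ) 1)] fun x : ℝ => 1/(1-x) := by
      filter_upwards [ae_restrict_mem measurableSet_Ioo] with x hx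
      have : (0:ℝ) < 1 - x := by linarith [hx.2]
      positivity
    by_contra h
    exact hnotint ((lintegral_ofReal_ne_top_iff_integrable hmeas hnn).1 h)
end

section
/- Let X and Y be symmetric Banach function spaces on I on which the Cesàro operator C is bounded. If CX ⊆ CY with continuous inclusion, then X ⊆ Y with continuous inclusion. Consequently X = Y (with equivalent norms) if and only if CX = CY (with equivalent norms). -/
open MeasureTheory Filter Set
open scoped ENNReal

noncomputable section

/-- Continuous inclusion of one abstract function space into another. -/
def ContIncl (M₁ M₂ : (ℝ → ℝ) → Prop) (N₁ N₂ : (ℝ → ℝ) → ℝ) : Prop :=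
  ∃ K : ℝ, ∀ f, M₁ f → M₂ f ∧ N₂ f ≤ K * N₁ f

/-- `X` is a symmetric space: membership and the norm depend only on the distribution. -/
def IsSymmetricBFS (I : Set ℝ) (X : BanachFunctionSpace I) : Prop :=
  ∀ f g : ℝ → ℝ, X.Mem f →
    (∀ lam : ℝ, 0 < lam →
      volume {x ∈ I | lam < |f x|} = volume {x ∈ I | lam < |g x|}) →
    X.Mem g ∧ X.norm g = X.norm f

def dfn (I : Set ℝ) (f : ℝ → ℝ) (lam : ℝ) : ℝ≥0∞ := volume {x ∈ I | lam < |f x|}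

lemma dfn_antitone (I : Set ℝ) (f : ℝ → ℝ) : Antitone (dfn I f) := by
  intro a b hab
  exact measure_mono (fun x hx => ⟨hx.1, lt_of_le_of_lt hab hx.2⟩)

lemma dfn_le_volume (I : Set ℝ) (f : ℝ → ℝ) (lam : ℝ) : dfn I f lam ≤ volume I :=
  measure_mono (sep_subset _ _)

lemma dfn_right_cont (I : Set ℝ) (f : ℝ → ℝ) (lam : ℝ) :
    dfn I f lam = ⨆ n : ℕ, dfn I f (lam + 1/(n+1)) := by
  have hU : {x ∈ I | lam < |f x|} = ⋃ n : ℕ, {x ∈ I | lam + 1/(n+1) < |f x|} := by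
    ext x
    simp only [mem_iUnion, mem_sep_iff]
    constructor
    · rintro ⟨hxI, hx⟩
      obtain ⟨n, hn⟩ := exists_nat_one_div_lt (sub_pos.mpr hx)
      exact ⟨n, hxI, by linarith⟩
    · rintro ⟨n, hxI, hx⟩
      have : (0:ℝ) < 1/(n+1) := by positivity
      exact ⟨hxI, by linarith⟩
  have hdir : Directed (· ⊆ ·) (fun n : ℕ => {x ∈ I | lam + 1/(n+1) < |f x|}) := by
    intro m n
    refine ⟨max m n, fun x hx => ⟨hx.1, lt_of_le_of_lt ?_ hx.2⟩, fun x hx => ⟨hx.1, lt_of_le_of_lt ?_ hx.2⟩⟩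
    · have h1 : (1:ℝ)/(max m n + 1) ≤ 1/(m+1) := by
        apply one_div_le_one_div_of_le (by positivity)
        have := le_max_left (m:ℝ) n
        push_cast
        simp [le_max_left, le_max_right]
      linarith
    · have h1 : (1:ℝ)/(max m n + 1) ≤ 1/(n+1) := by
        apply one_div_le_one_div_of_le (by positivity)
        push_cast
        simp [le_max_left, le_max_right]
      linarith
  rw [dfn, hU, hdir.measure_iUnion]
  rfl
lemma vol_initial {I : Set ℝ} (hI : I = Set.Icc 0 1 ∨ I = Set.Ici 0) {m : ℝ≥0∞}
    (hm : m ≤ volume I) : volume {t ∈ I | ENNReal.ofReal t < m} = m := by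
  rcases hI with hI | hI
  · subst hI
    have hvol : volume (Set.Icc (0:ℝ) 1) = 1 := by simp
    rw [hvol] at hm
    have htop : m ≠ ⊤ := (lt_of_le_of_lt hm (by simp)).ne
    have htr : m.toReal ≤ 1 := by
      have := ENNReal.toReal_mono (by simp : (1:ℝ≥0∞) ≠ ⊤) hm
      simpa using this
    have hset : {t ∈ Set.Icc (0:ℝ) 1 | ENNReal.ofReal t < m} = Set.Ico 0 m.toReal := by
      ext t
      simp only [mem_sep_iff, mem_Icc, mem_Ico]
      constructor
      · rintro ⟨⟨h0, h1⟩, hlt⟩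
        exact ⟨h0, (ENNReal.ofReal_lt_iff_lt_toReal h0 htop).mp hlt⟩
      · rintro ⟨h0, hlt⟩
        exact ⟨⟨h0, le_trans hlt.le htr⟩, (ENNReal.ofReal_lt_iff_lt_toReal h0 htop).mpr hlt⟩
    rw [hset, Real.volume_Ico, sub_zero, ENNReal.ofReal_toReal htop]
  · subst hI
    by_cases htop : m = ⊤
    · subst htop
      have hset : {t ∈ Set.Ici (0:ℝ) | ENNReal.ofReal t < ⊤} = Set.Ici 0 := by
        ext t; simp [ENNReal.ofReal_lt_top]
      rw [hset, Real.volume_Ici]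
    · have hset : {t ∈ Set.Ici (0:ℝ) | ENNReal.ofReal t < m} = Set.Ico 0 m.toReal := by
        ext t
        simp only [mem_sep_iff, mem_Ici, mem_Ico]
        constructor
        · rintro ⟨h0, hlt⟩
          exact ⟨h0, (ENNReal.ofReal_lt_iff_lt_toReal h0 htop).mp hlt⟩
        · rintro ⟨h0, hlt⟩
          exact ⟨h0, (ENNReal.ofReal_lt_iff_lt_toReal h0 htop).mpr hlt⟩
      rw [hset, Real.volume_Ico, sub_zero, ENNReal.ofReal_toReal htop]

lemma bad_impossible {I : Set ℝ} (hI : I = Set.Icc 0 1 ∨ I = Set.Ici 0)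
    (X : BanachFunctionSpace I) (hsX : IsSymmetricBFS I X) (f : ℝ → ℝ) (hf : X.Mem f)
    (t₀ : ℝ) (ht₀ : 0 < t₀)
    (hbad : ∀ lam : ℝ, 0 ≤ lam → ENNReal.ofReal t₀ < dfn I f lam) : False := by
  classical
  set c : ℝ := min t₀ 1 with hc
  have hcpos : 0 < c := lt_min ht₀ one_pos
  have hc1 : c ≤ 1 := min_le_right _ _
  set w : ℝ → ℝ := fun t => if t ∈ I ∧ t < c then (1:ℝ) else 0 with hw
  -- Step A : for every n, X.Mem w and X.norm w ≤ X.norm f / (n+1)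
  have hA : ∀ n : ℕ, X.Mem w ∧ X.norm w ≤ X.norm f / (n+1) := by
    intro n
    have hn1 : (0:ℝ) < (n:ℝ)+1 := by positivity
    set h : ℝ → ℝ := fun x => if ((n:ℝ)+1) < |f x| then f x else 0 with hh
    have hcomph : ∀ x, |h x| ≤ |f x| := by
      intro x
      by_cases hx : ((n:ℝ)+1) < |f x| <;> simp [hh, hx, abs_nonneg]
    have hmemh : X.Mem h :=
      X.ideal_mem h f (Filter.Eventually.of_forall hcomph) hf
    have hnormh : X.norm h ≤ X.norm f :=
      X.ideal_norm h f (Filter.Eventually.of_forall hcomph) hf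
    set e : ℝ → ℝ := fun x => if x ∈ I ∧ ((n:ℝ)+1) < |f x| then (1:ℝ) else 0 with he
    have hcomp : ∀ x, |e x| ≤ |((1/((n:ℝ)+1)) • h) x| := by
      intro x
      by_cases hx : x ∈ I ∧ ((n:ℝ)+1) < |f x|
      · have hfx : ((n:ℝ)+1) < |f x| := hx.2
        simp only [he, if_pos hx, Pi.smul_apply, hh, if_pos hfx, smul_eq_mul, abs_mul]
        rw [abs_of_nonneg (by positivity : (0:ℝ) ≤ 1/((n:ℝ)+1)), abs_one]
        rw [div_mul_eq_mul_div, one_mul, le_div_iff₀ hn1, one_mul]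
        exact hfx.le
      · simp only [he, if_neg hx]
        simp [abs_nonneg]
        positivity
    have hmeme : X.Mem e :=
      X.ideal_mem e _ (Filter.Eventually.of_forall hcomp) (X.smul_mem _ h hmemh)
    have hnorme : X.norm e ≤ X.norm f / ((n:ℝ)+1) := by
      have h1 : X.norm e ≤ X.norm ((1/((n:ℝ)+1)) • h) :=
        X.ideal_norm e _ (Filter.Eventually.of_forall hcomp) (X.smul_mem _ h hmemh)
      have h2 : X.norm ((1/((n:ℝ)+1)) • h) = |1/((n:ℝ)+1)| * X.norm h := X.norm_smul _ h
      rw [h2, abs_of_nonneg (by positivity : (0:ℝ) ≤ 1/((n:ℝ)+1))] at h1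
      calc X.norm e ≤ 1/((n:ℝ)+1) * X.norm h := h1
        _ ≤ 1/((n:ℝ)+1) * X.norm f := by
            apply mul_le_mul_of_nonneg_left hnormh (by positivity)
        _ = X.norm f / ((n:ℝ)+1) := by ring
    -- the set-theoretic "rearrangement" g of e
    set m : ℝ≥0∞ := dfn I f ((n:ℝ)+1) with hm
    set g : ℝ → ℝ := fun t => if t ∈ I ∧ ENNReal.ofReal t < m then (1:ℝ) else 0 with hg
    have hdist : ∀ lam : ℝ, 0 < lam →
        volume {x ∈ I | lam < |e x|} = volume {x ∈ I | lam < |g x|} := by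
      intro lam hlam
      by_cases hlam1 : lam < 1
      · have hse : {x ∈ I | lam < |e x|} = {x ∈ I | ((n:ℝ)+1) < |f x|} := by
          ext x
          simp only [mem_sep_iff, he]
          constructor
          · rintro ⟨hxI, hx⟩
            by_cases hc' : x ∈ I ∧ ((n:ℝ)+1) < |f x|
            · exact ⟨hxI, hc'.2⟩
            · simp [if_neg hc'] at hx; linarith
          · rintro ⟨hxI, hx⟩
            refine ⟨hxI, ?_⟩
            rw [if_pos ⟨hxI, hx⟩]
            simpa using hlam1
        have hsg : {x ∈ I | lam < |g x|} = {t ∈ I | ENNReal.ofReal t < m} := by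
          ext x
          simp only [mem_sep_iff, hg]
          constructor
          · rintro ⟨hxI, hx⟩
            by_cases hc' : x ∈ I ∧ ENNReal.ofReal x < m
            · exact ⟨hxI, hc'.2⟩
            · simp [if_neg hc'] at hx; linarith
          · rintro ⟨hxI, hx⟩
            refine ⟨hxI, ?_⟩
            rw [if_pos ⟨hxI, hx⟩]
            simpa using hlam1
        rw [hse, hsg, vol_initial hI (dfn_le_volume I f _)]
        rfl
      · push_neg at hlam1
        have hse : {x ∈ I | lam < |e x|} = ∅ := by
          ext x
          simp only [mem_sep_iff, mem_empty_iff_false, iff_false, not_and]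
          intro hxI hx
          have : |e x| ≤ 1 := by
            by_cases hc' : x ∈ I ∧ ((n:ℝ)+1) < |f x| <;> simp [he, hc']
          linarith
        have hsg : {x ∈ I | lam < |g x|} = ∅ := by
          ext x
          simp only [mem_sep_iff, mem_empty_iff_false, iff_false, not_and]
          intro hxI hx
          have : |g x| ≤ 1 := by
            by_cases hc' : x ∈ I ∧ ENNReal.ofReal x < m <;> simp [hg, hc']
          linarith
        rw [hse, hsg]
    obtain ⟨hmemg, hnormg⟩ := hsX e g hmeme hdist
    -- w ≤ g pointwise
    have hcompw : ∀ x, |w x| ≤ |g x| := by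
      intro x
      by_cases hx : x ∈ I ∧ x < c
      · have hgx : x ∈ I ∧ ENNReal.ofReal x < m := by
          refine ⟨hx.1, lt_of_le_of_lt
            (ENNReal.ofReal_le_ofReal (le_of_lt (lt_of_lt_of_le hx.2 (min_le_left _ _))))
            (hbad ((n:ℝ)+1) (by positivity))⟩
        simp [hw, hg, hx, hgx]
      · simp [hw, if_neg hx, abs_nonneg]
    refine ⟨X.ideal_mem w g (Filter.Eventually.of_forall hcompw) hmemg, ?_⟩
    calc X.norm w ≤ X.norm g :=
          X.ideal_norm w g (Filter.Eventually.of_forall hcompw) hmemg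
      _ = X.norm e := hnormg
      _ ≤ X.norm f / ((n:ℝ)+1) := hnorme
  -- Step B : X.norm w = 0
  have hmemw : X.Mem w := (hA 0).1
  have hnw : X.norm w = 0 := by
    by_contra hne
    have hpos : 0 < X.norm w := lt_of_le_of_ne (X.norm_nonneg w) (Ne.symm hne)
    obtain ⟨n, hn⟩ := exists_nat_gt (X.norm f / X.norm w)
    have h1 : X.norm w ≤ X.norm f / (n+1) := (hA n).2
    have h2 : X.norm f / X.norm w < n + 1 := lt_trans hn (by linarith)
    rw [div_lt_iff₀ hpos] at h2
    rw [le_div_iff₀ (by positivity : (0:ℝ) < (n:ℝ)+1)] at h1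
    nlinarith
  -- Step C : contradiction with positivity of the measure of I ∩ [0, c)
  have hae := X.norm_eq_zero w hmemw hnw
  rw [ae_iff] at hae
  have hsub : Set.Ico (0:ℝ) c ⊆ {x | ¬ w x = 0} := by
    intro x hx
    have hxI : x ∈ I := by
      rcases hI with h | h <;> subst h
      · exact ⟨hx.1, le_trans hx.2.le hc1⟩
      · exact hx.1
    have hmem : x ∈ I ∧ x < c := ⟨hxI, hx.2⟩
    simp only [Set.mem_setOf_eq, hw, if_pos hmem]
    norm_num
  have h0 : volume.restrict I (Set.Ico (0:ℝ) c) = 0 :=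
    measure_mono_null hsub hae
  rw [Measure.restrict_apply measurableSet_Ico] at h0
  have hIsub : Set.Ico (0:ℝ) c ∩ I = Set.Ico (0:ℝ) c := by
    apply inter_eq_left.mpr
    intro x hx
    rcases hI with h | h <;> subst h
    · exact ⟨hx.1, le_trans hx.2.le hc1⟩
    · exact hx.1
  rw [hIsub, Real.volume_Ico, sub_zero] at h0
  exact absurd h0 (by simpa using (ENNReal.ofReal_pos.mpr hcpos).ne')

/-- The decreasing rearrangement. -/
def fstar (I : Set ℝ) (f : ℝ → ℝ) (t : ℝ) : ℝ :=
  sInf {lam : ℝ | 0 ≤ lam ∧ dfn I f lam ≤ ENNReal.ofReal t}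

section fstar
variable {I : Set ℝ} {f : ℝ → ℝ}

lemma fstar_bddBelow (t : ℝ) :
    BddBelow {lam : ℝ | 0 ≤ lam ∧ dfn I f lam ≤ ENNReal.ofReal t} :=
  ⟨0, fun x hx => hx.1⟩

lemma fstar_nonneg (t : ℝ) : 0 ≤ fstar I f t :=
  Real.sInf_nonneg (fun x hx => hx.1)

lemma fstar_le {t lam : ℝ} (h0 : 0 ≤ lam) (h : dfn I f lam ≤ ENNReal.ofReal t) :
    fstar I f t ≤ lam :=
  csInf_le (fstar_bddBelow t) ⟨h0, h⟩

variable (hgood : ∀ t : ℝ, 0 < t → ∃ lam, 0 ≤ lam ∧ dfn I f lam ≤ ENNReal.ofReal t)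
include hgood

lemma fstar_spec {t lam : ℝ} (ht : 0 < t) (h : fstar I f t ≤ lam) :
    dfn I f lam ≤ ENNReal.ofReal t := by
  have hne : {l : ℝ | 0 ≤ l ∧ dfn I f l ≤ ENNReal.ofReal t}.Nonempty := hgood t ht
  rw [dfn_right_cont I f lam]
  refine iSup_le fun n => ?_
  have hlt : fstar I f t < lam + 1/(n+1) := lt_of_le_of_lt h (lt_add_of_pos_right _ (by positivity))
  obtain ⟨nu, hnu, hnult⟩ := exists_lt_of_csInf_lt hne hlt
  exact le_trans (dfn_antitone I f hnult.le) hnu.2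

lemma fstar_anti {s t : ℝ} (hs : 0 < s) (hst : s ≤ t) : fstar I f t ≤ fstar I f s := by
  refine csInf_le_csInf (fstar_bddBelow t) (hgood s hs) ?_
  intro lam hlam
  exact ⟨hlam.1, le_trans hlam.2 (ENNReal.ofReal_le_ofReal hst)⟩

lemma fstar_dist (hI : I = Set.Icc 0 1 ∨ I = Set.Ici 0) {lam : ℝ} (hlam : 0 < lam) :
    volume {t ∈ I | lam < |fstar I f t|} = dfn I f lam := by
  have habs : ∀ t, |fstar I f t| = fstar I f t := fun t => abs_of_nonneg (fstar_nonneg t)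
  set B : Set ℝ := {t ∈ I | ENNReal.ofReal t < dfn I f lam} with hB
  have hvolB : volume B = dfn I f lam := vol_initial hI (dfn_le_volume I f lam)
  apply le_antisymm
  · -- upper bound
    refine le_trans (measure_mono ?_) hvolB.le
    intro t ht
    rw [mem_sep_iff, habs] at ht
    refine ⟨ht.1, ?_⟩
    by_contra hcon
    push_neg at hcon
    exact absurd (fstar_le hlam.le hcon) (not_le.mpr ht.2)
  · -- lower bound
    have hsub : B \ {0} ⊆ {t ∈ I | lam < |fstar I f t|} := by
      rintro t ⟨⟨htI, htlt⟩, ht0⟩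
      have htpos : 0 < t := by
        rcases hI with h | h <;> rw [h] at htI
        · exact lt_of_le_of_ne htI.1 (Ne.symm ht0)
        · exact lt_of_le_of_ne htI (Ne.symm ht0)
      refine ⟨htI, ?_⟩
      rw [habs]
      by_contra hcon
      push_neg at hcon
      exact absurd (fstar_spec hgood htpos hcon) (not_le.mpr htlt)
    calc dfn I f lam = volume B := hvolB.symm
      _ ≤ volume (B \ {0}) + volume ({0} : Set ℝ) := by
          refine le_trans (measure_mono ?_) (measure_union_le _ _)
          intro x hx
          by_cases hx0 : x = 0
          · exact Or.inr (by simp [hx0])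
          · exact Or.inl ⟨hx, hx0⟩
      _ = volume (B \ {0}) := by simp
      _ ≤ volume {t ∈ I | lam < |fstar I f t|} := measure_mono hsub

lemma fstar_ptwise {x : ℝ} (hx : 0 < x) :
    ENNReal.ofReal |fstar I f x| ≤ ces (fstar I f) x := by
  have hint : ENNReal.ofReal (fstar I f x) * ENNReal.ofReal x ≤
      ∫⁻ t in Set.Ioc (0:ℝ) x, ENNReal.ofReal |fstar I f t| := by
    have hmono : ∀ᵐ t ∂(volume.restrict (Set.Ioc (0:ℝ) x)),
        ENNReal.ofReal (fstar I f x) ≤ ENNReal.ofReal |fstar I f t| := by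
      filter_upwards [ae_restrict_mem measurableSet_Ioc] with t ht
      rw [abs_of_nonneg (fstar_nonneg t)]
      exact ENNReal.ofReal_le_ofReal (fstar_anti hgood ht.1 ht.2)
    calc ENNReal.ofReal (fstar I f x) * ENNReal.ofReal x
        = ∫⁻ _ in Set.Ioc (0:ℝ) x, ENNReal.ofReal (fstar I f x) := by
          rw [setLIntegral_const, Real.volume_Ioc, sub_zero]
      _ ≤ _ := lintegral_mono_ae hmono
  have h1 : ENNReal.ofReal (1/x) * (ENNReal.ofReal (fstar I f x) * ENNReal.ofReal x) =
      ENNReal.ofReal |fstar I f x| := by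
    rw [mul_comm (ENNReal.ofReal (fstar I f x)), ← mul_assoc, ← ENNReal.ofReal_mul
      (by positivity : (0:ℝ) ≤ 1/x), one_div_mul_cancel hx.ne', ENNReal.ofReal_one, one_mul,
      abs_of_nonneg (fstar_nonneg x)]
  rw [ces, ← h1]
  exact mul_le_mul_right hint _

end fstar

lemma ae_pos {I : Set ℝ} (hI : I = Set.Icc 0 1 ∨ I = Set.Ici 0) :
    ∀ᵐ x ∂(volume.restrict I), 0 < x := by
  have hmeas : MeasurableSet I := by
    rcases hI with h | h <;> subst h
    · exact measurableSet_Icc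
    · exact measurableSet_Ici
  have h1 : ∀ᵐ x ∂(volume.restrict I), x ∈ I := ae_restrict_mem hmeas
  have h2 : ∀ᵐ x ∂(volume.restrict I), x ≠ 0 := by
    rw [ae_iff]
    refine measure_mono_null (fun x hx => ?_) (?_ : volume.restrict I {(0:ℝ)} = 0)
    · simpa using hx
    · rw [Measure.restrict_apply (measurableSet_singleton 0)]
      exact measure_mono_null (inter_subset_left) (measure_singleton 0)
  filter_upwards [h1, h2] with x hx1 hx2
  have : 0 ≤ x := by
    rcases hI with h | h <;> rw [h] at hx1
    · exact hx1.1
    · exact hx1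
  exact lt_of_le_of_ne this (Ne.symm hx2)

lemma key_transfer {I : Set ℝ} (hI : I = Set.Icc 0 1 ∨ I = Set.Ici 0)
    (X Y : BanachFunctionSpace I)
    (hsX : IsSymmetricBFS I X) (hsY : IsSymmetricBFS I Y) (hCX : CBounded I X)
    (hincl : ContIncl (MemCX I X) (MemCX I Y)
      (fun f => X.norm (cesR f)) (fun f => Y.norm (cesR f))) :
    ContIncl X.Mem Y.Mem X.norm Y.norm := by
  obtain ⟨K, hK⟩ := hincl
  obtain ⟨M, hM⟩ := hCX
  refine ⟨max K 0 * max M 0, fun f hf => ?_⟩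
  by_cases hgood : ∀ t : ℝ, 0 < t → ∃ lam, 0 ≤ lam ∧ dfn I f lam ≤ ENNReal.ofReal t
  swap
  · exfalso
    push_neg at hgood
    obtain ⟨t₀, ht₀, hbad⟩ := hgood
    exact bad_impossible hI X hsX f hf t₀ ht₀ hbad
  · set g := fstar I f with hg
    have hdist : ∀ lam : ℝ, 0 < lam →
        volume {x ∈ I | lam < |f x|} = volume {x ∈ I | lam < |g x|} :=
      fun lam hlam => (fstar_dist hgood hI hlam).symm
    obtain ⟨hmemXg, hnormXg⟩ := hsX f g hf hdist
    obtain ⟨hmemCXg, hnormCXg⟩ := hM g hmemXg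
    obtain ⟨hmemCYg, hnormCYg⟩ := hK g hmemCXg
    obtain ⟨hfin, hmemYCg⟩ := hmemCYg
    -- pointwise domination g ≤ C g a.e. on I
    have hae : ∀ᵐ x ∂(volume.restrict I), |g x| ≤ |cesR g x| := by
      filter_upwards [ae_pos hI, hfin] with x hx hfx
      have hpt : ENNReal.ofReal |g x| ≤ ces g x := fstar_ptwise hgood hx
      have := ENNReal.toReal_mono hfx hpt
      rw [ENNReal.toReal_ofReal (abs_nonneg _)] at this
      calc |g x| ≤ (ces g x).toReal := this
        _ ≤ |cesR g x| := le_abs_self _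
    have hmemYg : Y.Mem g := Y.ideal_mem g (cesR g) hae hmemYCg
    have hnormYg : Y.norm g ≤ Y.norm (cesR g) := Y.ideal_norm g (cesR g) hae hmemYCg
    obtain ⟨hmemYf, hnormYf⟩ := hsY g f hmemYg (fun lam hlam => (hdist lam hlam).symm)
    refine ⟨hmemYf, ?_⟩
    have hXf : X.norm g = X.norm f := hnormXg
    have hXnn : 0 ≤ X.norm g := X.norm_nonneg g
    have hXCnn : 0 ≤ X.norm (cesR g) := X.norm_nonneg _
    calc Y.norm f = Y.norm g := hnormYf
      _ ≤ Y.norm (cesR g) := hnormYg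
      _ ≤ K * X.norm (cesR g) := hnormCYg
      _ ≤ max K 0 * X.norm (cesR g) := mul_le_mul_of_nonneg_right (le_max_left _ _) hXCnn
      _ ≤ max K 0 * (M * X.norm g) :=
          mul_le_mul_of_nonneg_left hnormCXg (le_max_right K 0)
      _ ≤ max K 0 * (max M 0 * X.norm g) :=
          mul_le_mul_of_nonneg_left
            (mul_le_mul_of_nonneg_right (le_max_left _ _) hXnn) (le_max_right K 0)
      _ = max K 0 * max M 0 * X.norm f := by rw [hXf]; ring
/-- If `X, Y` are symmetric spaces on which `C` is bounded and `CX ⊆ CY` continuously,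
then `X ⊆ Y` continuously; consequently `X = Y` iff `CX = CY`. -/
theorem cesaro_inclusion_transfers (I : Set ℝ) (hI : I = Set.Icc 0 1 ∨ I = Set.Ici 0)
    (X Y : BanachFunctionSpace I)
    (hsX : IsSymmetricBFS I X) (hsY : IsSymmetricBFS I Y)
    (hCX : CBounded I X) (hCY : CBounded I Y) :
    (ContIncl (MemCX I X) (MemCX I Y)
        (fun f => X.norm (cesR f)) (fun f => Y.norm (cesR f)) →
      ContIncl X.Mem Y.Mem X.norm Y.norm) ∧
    ((ContIncl X.Mem Y.Mem X.norm Y.norm ∧ ContIncl Y.Mem X.Mem Y.norm X.norm) ↔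
      (ContIncl (MemCX I X) (MemCX I Y)
          (fun f => X.norm (cesR f)) (fun f => Y.norm (cesR f)) ∧
        ContIncl (MemCX I Y) (MemCX I X)
          (fun f => Y.norm (cesR f)) (fun f => X.norm (cesR f)))) := by
  constructor
  · exact key_transfer hI X Y hsX hsY hCX
  · constructor
    · rintro ⟨⟨K1, h1⟩, ⟨K2, h2⟩⟩
      refine ⟨⟨K1, fun f hf => ?_⟩, ⟨K2, fun f hf => ?_⟩⟩
      · exact ⟨⟨hf.1, (h1 _ hf.2).1⟩, (h1 _ hf.2).2⟩
      · exact ⟨⟨hf.1, (h2 _ hf.2).1⟩, (h2 _ hf.2).2⟩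
    · rintro ⟨hxy, hyx⟩
      exact ⟨key_transfer hI X Y hsX hsY hCX hxy, key_transfer hI Y X hsY hsX hCY hyx⟩
end
end

section
/- Let X be a Banach function space on I such that the Cesàro space CX is nontrivial. Then CX contains an order asymptotically isometric copy of ℓ¹: there exist a sequence (g_n) ⊂ CX of norm-one functions with pairwise disjoint supports and a sequence (ε_n) ⊂ (0,1) with ε_n → 0, such that Σ(1−ε_n)|α_n| ≤ ‖Σ α_n g_n‖_{CX} ≤ Σ|α_n| for every (α_n) ∈ ℓ¹. -/
open MeasureTheory Filter Set
open scoped ENNReal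

noncomputable section

-- basic lemmas
lemma ces_nonpos (f : ℝ → ℝ) {x : ℝ} (hx : x ≤ 0) : ces f x = 0 := by
  unfold ces
  rw [Set.Ioc_eq_empty (by linarith), Measure.restrict_empty, lintegral_zero_measure, mul_zero]

lemma ces_smul (c : ℝ) (f : ℝ → ℝ) (x : ℝ) :
    ces (c • f) x = ENNReal.ofReal |c| * ces f x := by
  unfold ces
  have : ∀ t, ENNReal.ofReal |(c • f) t| = ENNReal.ofReal |c| * ENNReal.ofReal |f t| := by
    intro t
    simp [Pi.smul_apply, abs_mul, ENNReal.ofReal_mul (abs_nonneg c)]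
  simp_rw [this]
  rw [lintegral_const_mul' _ _ (by simp)]
  ring

lemma cesR_smul (c : ℝ) (f : ℝ → ℝ) : cesR (c • f) = |c| • cesR f := by
  funext x
  simp [cesR, ces_smul, ENNReal.toReal_mul]

lemma cesR_nonneg (f : ℝ → ℝ) (x : ℝ) : 0 ≤ cesR f x := ENNReal.toReal_nonneg

-- indicator computation
lemma ces_indicator {u v : ℝ} (hu : 0 < u) (x : ℝ) :
    ces (Set.indicator (Set.Ioc u v) 1) x
      = ENNReal.ofReal (1/x) * ENNReal.ofReal (min v x - u) := by
  unfold ces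
  congr 1
  have h1 : ∀ t, ENNReal.ofReal |Set.indicator (Set.Ioc u v) (1 : ℝ → ℝ) t|
      = Set.indicator (Set.Ioc u v) (fun _ => (1:ℝ≥0∞)) t := by
    intro t
    by_cases ht : t ∈ Set.Ioc u v <;> simp [ht]
  simp_rw [h1]
  rw [lintegral_indicator measurableSet_Ioc]
  simp only [lintegral_const, Measure.restrict_restrict measurableSet_Ioc]
  rw [Set.Ioc_inter_Ioc]
  simp [Real.volume_Ioc, max_eq_left hu.le, one_mul]

def wfun (lam : ℝ) : ℝ → ℝ := Set.indicator (Set.Ioi lam) (fun x => 1/x)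

lemma wfun_nonneg {lam : ℝ} (hl : 0 ≤ lam) (x : ℝ) : 0 ≤ wfun lam x := by
  unfold wfun
  by_cases hx : x ∈ Set.Ioi lam
  · simp only [Set.indicator_of_mem hx]
    have : 0 < x := lt_of_le_of_lt hl hx
    positivity
  · simp [Set.indicator_of_notMem hx]

lemma wfun_anti {lam mu : ℝ} (hl : 0 ≤ lam) (h : lam ≤ mu) (x : ℝ) : wfun mu x ≤ wfun lam x := by
  unfold wfun
  by_cases hx : x ∈ Set.Ioi mu
  · rw [Set.indicator_of_mem hx, Set.indicator_of_mem (by simp at hx ⊢; linarith)]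
  · rw [Set.indicator_of_notMem hx]
    by_cases hx' : x ∈ Set.Ioi lam
    · rw [Set.indicator_of_mem hx']
      simp at hx
      simp only [Set.mem_Ioi] at hx'
      have : 0 < x := lt_of_le_of_lt hl hx'
      positivity
    · simp [Set.indicator_of_notMem hx']

lemma cesR_indicator {u v : ℝ} (hu : 0 < u) (x : ℝ) :
    cesR (Set.indicator (Set.Ioc u v) 1) x = max (1/x) 0 * max (min v x - u) 0 := by
  rw [cesR, ces_indicator hu, ENNReal.toReal_mul, ENNReal.toReal_ofReal', ENNReal.toReal_ofReal']

lemma cesR_ind_le {u v : ℝ} (hu : 0 < u) (huv : u ≤ v) (x : ℝ) :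
    cesR (Set.indicator (Set.Ioc u v) 1) x ≤ (v - u) * wfun u x := by
  rw [cesR_indicator hu]
  by_cases hx : x ∈ Set.Ioi u
  · simp only [wfun, Set.indicator_of_mem hx]
    simp only [Set.mem_Ioi] at hx
    have hx0 : 0 < x := lt_trans hu hx
    rw [max_eq_left (by positivity)]
    have h1 : max (min v x - u) 0 ≤ v - u := by
      rcases le_total (min v x - u) 0 with h | h
      · simp [max_eq_right h]; linarith
      · rw [max_eq_left h]; have := min_le_left v x; linarith
    calc 1/x * max (min v x - u) 0 ≤ 1/x * (v - u) := by
          apply mul_le_mul_of_nonneg_left h1 (by positivity)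
      _ = (v - u) * (1/x) := by ring
  · simp only [Set.mem_Ioi, not_lt] at hx
    have : min v x - u ≤ 0 := by have := min_le_right v x; linarith
    rw [max_eq_right this, mul_zero, wfun, Set.indicator_of_notMem (by simp; linarith)]
    simp

lemma wfun_le_cesR_ind {u v : ℝ} (hu : 0 < u) (huv : u ≤ v) (x : ℝ) :
    (v - u) * wfun v x ≤ cesR (Set.indicator (Set.Ioc u v) 1) x := by
  rw [cesR_indicator hu]
  by_cases hx : x ∈ Set.Ioi v
  · simp only [wfun, Set.indicator_of_mem hx]
    simp only [Set.mem_Ioi] at hx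
    have hx0 : 0 < x := by linarith
    rw [min_eq_left hx.le, max_eq_left (by positivity), max_eq_left (by linarith)]
    exact le_of_eq (by ring)
  · rw [wfun, Set.indicator_of_notMem hx, mul_zero]
    positivity

section Base
variable {I : Set ℝ} (X : BanachFunctionSpace I)

lemma mem_wfun_of_le {lam mu : ℝ} (hl : 0 < lam) (h : lam ≤ mu) (hm : X.Mem (wfun lam)) :
    X.Mem (wfun mu) := by
  apply X.ideal_mem _ _ _ hm
  filter_upwards with x
  rw [abs_of_nonneg (wfun_nonneg (by linarith) x), abs_of_nonneg (wfun_nonneg hl.le x)]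
  exact wfun_anti hl.le h x

lemma exists_base (hI : I = Set.Icc 0 1 ∨ I = Set.Ici 0)
    (hne : ∃ f : ℝ → ℝ, Measurable f ∧ MemCX I X f ∧
        ¬ (∀ᵐ x ∂(volume.restrict I), f x = 0)) :
    ∃ a b : ℝ, 0 < a ∧ a < b ∧ Set.Ioc 0 b ⊆ I ∧ X.Mem (wfun a) := by
  obtain ⟨f, hf, ⟨hfin, hmem⟩, hnz⟩ := hne
  -- the set where f is nonzero
  set T : Set ℝ := {x | f x ≠ 0} with hT
  have hTmeas : MeasurableSet T := (hf (measurableSet_singleton 0)).compl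
  have hμT : volume.restrict I T ≠ 0 := by
    intro h0
    exact hnz (by rwa [MeasureTheory.ae_iff])
  have hImeas : MeasurableSet I := by
    rcases hI with h | h <;> rw [h]
    exacts [measurableSet_Icc, measurableSet_Ici]
  rw [Measure.restrict_apply hTmeas] at hμT
  -- choose a' with positive mass of T on Ioc 0 a', and room above
  have key : ∃ a' : ℝ, 0 < a' ∧ volume (T ∩ Set.Ioc 0 a') ≠ 0 ∧
      ∃ b, a' < b ∧ Set.Ioc 0 b ⊆ I := by
    have main : ∀ q : ℕ → ℝ, volume (T ∩ ⋃ n, Set.Ioc 0 (q n)) ≠ 0 →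
        ∃ n, volume (T ∩ Set.Ioc 0 (q n)) ≠ 0 := by
      intro q hq
      by_contra hall
      push_neg at hall
      apply hq
      rw [Set.inter_iUnion]
      exact measure_iUnion_null hall
    rcases hI with h | h
    · have hU : (⋃ n : ℕ, Set.Ioc 0 (1 - 1/(n+2) : ℝ)) = Set.Ioo 0 1 := by
        ext x
        simp only [Set.mem_iUnion, Set.mem_Ioc, Set.mem_Ioo]
        constructor
        · rintro ⟨n, h1, h2⟩
          have : (0:ℝ) < 1/(n+2) := by positivity
          exact ⟨h1, by linarith⟩
        · rintro ⟨h1, h2⟩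
          obtain ⟨n, hn⟩ := exists_nat_one_div_lt (by linarith : (0:ℝ) < 1 - x)
          refine ⟨n, h1, ?_⟩
          have h2' : (1:ℝ)/(n+2) ≤ 1/(n+1) := by
            apply one_div_le_one_div_of_le (by positivity)
            push_cast; linarith
          linarith
      have hpos : volume (T ∩ ⋃ n : ℕ, Set.Ioc 0 (1 - 1/(n+2) : ℝ)) ≠ 0 := by
        rw [hU]
        intro h0
        apply hμT
        have hsub : T ∩ I ⊆ (T ∩ Set.Ioo 0 1) ∪ ({0} ∪ {1}) := by
          rw [h]
          intro x ⟨hx1, hx2⟩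
          rcases eq_or_lt_of_le hx2.1 with h1 | h1
          · exact Or.inr (Or.inl (by simp [← h1]))
          rcases eq_or_lt_of_le hx2.2 with h2 | h2
          · exact Or.inr (Or.inr (by simp [h2]))
          exact Or.inl ⟨hx1, h1, h2⟩
        refine le_antisymm ?_ zero_le
        calc volume (T ∩ I) ≤ volume ((T ∩ Set.Ioo 0 1) ∪ ({0} ∪ {1})) := measure_mono hsub
          _ ≤ volume (T ∩ Set.Ioo 0 1) + volume (({0} ∪ {1} : Set ℝ)) := measure_union_le _ _
          _ ≤ 0 + (volume ({0} : Set ℝ) + volume ({1} : Set ℝ)) := by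
              exact add_le_add h0.le (measure_union_le _ _)
          _ = 0 := by simp
      obtain ⟨n, hn⟩ := main _ hpos
      have hq1 : (0:ℝ) < 1/(n+2) := by positivity
      have hq2 : (0:ℝ) < 1 - 1/(n+2) := by
        have : (1:ℝ)/(n+2) ≤ 1/2 := by
          apply one_div_le_one_div_of_le (by norm_num)
          push_cast; linarith
        linarith
      exact ⟨_, hq2, hn, 1, by linarith, by rw [h]; exact Set.Ioc_subset_Icc_self⟩
    · have hU : (⋃ n : ℕ, Set.Ioc 0 ((n:ℝ) + 1)) = Set.Ioi 0 := by
        ext x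
        simp only [Set.mem_iUnion, Set.mem_Ioc, Set.mem_Ioi]
        constructor
        · rintro ⟨n, h1, _⟩; exact h1
        · intro h1
          obtain ⟨n, hn⟩ := exists_nat_ge x
          exact ⟨n, h1, by linarith⟩
      have hpos : volume (T ∩ ⋃ n : ℕ, Set.Ioc 0 ((n:ℝ) + 1)) ≠ 0 := by
        rw [hU]
        intro h0
        apply hμT
        have hsub : T ∩ I ⊆ (T ∩ Set.Ioi 0) ∪ {0} := by
          rw [h]
          intro x ⟨hx1, hx2⟩
          rcases eq_or_lt_of_le (Set.mem_Ici.1 hx2) with h' | h'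
          · exact Or.inr (by simp [← h'])
          · exact Or.inl ⟨hx1, h'⟩
        refine le_antisymm ?_ zero_le
        calc volume (T ∩ I) ≤ volume ((T ∩ Set.Ioi 0) ∪ {0}) := measure_mono hsub
          _ ≤ volume (T ∩ Set.Ioi 0) + volume ({0} : Set ℝ) := measure_union_le _ _
          _ = 0 := by simp [h0]
      obtain ⟨n, hn⟩ := main _ hpos
      exact ⟨_, by positivity, hn, (n:ℝ) + 2, by linarith,
        by rw [h]; exact fun x hx => le_of_lt hx.1⟩
  obtain ⟨a', ha'0, ha'T, b, hab, hIoc⟩ := key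
  -- the mass of |f| below a' is positive
  set cinf : ℝ≥0∞ := ∫⁻ t in Set.Ioc 0 a', ENNReal.ofReal |f t| with hcinf
  have hcpos : 0 < cinf := by
    rw [hcinf, lintegral_pos_iff_support (by fun_prop)]
    have hsupp : Function.support (fun t => ENNReal.ofReal |f t|) = T := by
      ext t
      simp [Function.mem_support, ENNReal.ofReal_eq_zero, not_le, abs_pos, hT]
    rw [hsupp, Measure.restrict_apply hTmeas]
    exact pos_iff_ne_zero.2 ha'T
  -- find a point above a' in I where ces f is finite
  have hpt : ∃ x, x ∈ I ∩ Set.Ioi a' ∧ ces f x ≠ ⊤ := by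
    apply MeasureTheory.Measure.exists_mem_of_measure_ne_zero_of_ae (μ := volume)
    · intro h0
      have : volume (Set.Ioc a' b) = 0 := by
        refine le_antisymm ?_ zero_le
        rw [← h0]
        apply measure_mono
        intro x hx
        exact ⟨hIoc ⟨ha'0.trans hx.1, hx.2⟩, hx.1⟩
      rw [Real.volume_Ioc] at this
      simp only [ENNReal.ofReal_eq_zero] at this
      linarith
    · exact ae_restrict_of_ae_restrict_of_subset Set.inter_subset_left hfin
  obtain ⟨x₁, ⟨hx₁I, hx₁a⟩, hx₁fin⟩ := hpt
  simp only [Set.mem_Ioi] at hx₁a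
  have hx₁0 : 0 < x₁ := ha'0.trans hx₁a
  have hcfin : cinf ≠ ⊤ := by
    intro htop
    apply hx₁fin
    unfold ces
    have hle : cinf ≤ ∫⁻ t in Set.Ioc 0 x₁, ENNReal.ofReal |f t| :=
      lintegral_mono_set (Set.Ioc_subset_Ioc_right hx₁a.le)
    rw [htop, top_le_iff] at hle
    rw [hle, ENNReal.mul_top (by simp [hx₁0, one_div, inv_pos])]
  set c : ℝ := cinf.toReal with hc
  have hc0 : 0 < c := ENNReal.toReal_pos hcpos.ne' hcfin
  -- membership of wfun a'
  have hmemw : X.Mem (wfun a') := by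
    apply X.ideal_mem _ ((1/c) • cesR f) _ (X.smul_mem _ _ hmem)
    filter_upwards [hfin] with x hx
    have hR0 : 0 ≤ (1/c) * cesR f x := by
      have := cesR_nonneg f x
      positivity
    rw [Pi.smul_apply, smul_eq_mul, abs_of_nonneg hR0,
      abs_of_nonneg (wfun_nonneg ha'0.le x)]
    by_cases hxa : x ∈ Set.Ioi a'
    · rw [wfun, Set.indicator_of_mem hxa]
      simp only [Set.mem_Ioi] at hxa
      have hx0 : 0 < x := ha'0.trans hxa
      have hles : ENNReal.ofReal (1/x) * cinf ≤ ces f x := by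
        unfold ces
        exact mul_le_mul_right (lintegral_mono_set (Set.Ioc_subset_Ioc_right hxa.le)) _
      have : (1/x) * c ≤ cesR f x := by
        have := ENNReal.toReal_mono hx (hles)
        rwa [ENNReal.toReal_mul, ENNReal.toReal_ofReal (by positivity)] at this
      calc 1/x = (1/c) * (1/x * c) := by field_simp
        _ ≤ (1/c) * cesR f x := mul_le_mul_of_nonneg_left this (by positivity)

    · rw [wfun, Set.indicator_of_notMem hxa]
      exact hR0
  exact ⟨a', b, ha'0, hab, hIoc, hmemw⟩


lemma exists_setup (hI : I = Set.Icc 0 1 ∨ I = Set.Ici 0)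
    (hne : ∃ f : ℝ → ℝ, Measurable f ∧ MemCX I X f ∧
        ¬ (∀ᵐ x ∂(volume.restrict I), f x = 0)) :
    ∃ (a a₀ : ℝ) (F : ℝ → ℝ), 0 < a ∧ a < a₀ ∧
      (∀ lam, a ≤ lam → X.Mem (wfun lam)) ∧
      (∀ lam, a ≤ lam → F lam = X.norm (wfun lam)) ∧
      Antitone F ∧
      (∀ lam, a ≤ lam → lam ≤ a₀ → 0 < F lam) ∧
      ContinuousAt F a₀ := by
  obtain ⟨a, b, ha0, hab, hIoc, hmemw⟩ := exists_base X hI hne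
  have hmem : ∀ lam, a ≤ lam → X.Mem (wfun lam) := fun lam h =>
    mem_wfun_of_le X ha0 h hmemw
  set F : ℝ → ℝ := fun lam => X.norm (wfun (max lam a)) with hF
  have hFeq : ∀ lam, a ≤ lam → F lam = X.norm (wfun lam) := by
    intro lam h; rw [hF]; simp [max_eq_left h]
  have hFanti : Antitone F := by
    intro lam mu h
    apply X.ideal_norm _ _ _ (hmem _ (le_max_right lam a))
    filter_upwards with x
    rw [abs_of_nonneg (wfun_nonneg (le_max_of_le_right ha0.le) x),
      abs_of_nonneg (wfun_nonneg (le_max_of_le_right ha0.le) x)]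
    exact wfun_anti (le_max_of_le_right ha0.le) (max_le_max h le_rfl) x
  have hFpos : ∀ lam, a ≤ lam → lam < b → 0 < F lam := by
    intro lam hal hlb
    rcases lt_or_ge 0 (F lam) with h | h
    · exact h
    exfalso
    have h0 : F lam = 0 := le_antisymm h (by rw [hFeq lam hal]; exact X.norm_nonneg _)
    rw [hFeq lam hal] at h0
    have hae := X.norm_eq_zero _ (hmem lam hal) h0
    rw [MeasureTheory.ae_iff] at hae
    have hsub : Set.Ioc lam b ⊆ {x | ¬ wfun lam x = 0} := by
      intro x hx
      have hx0 : 0 < x := lt_of_le_of_lt (ha0.le.trans hal) hx.1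
      simp only [Set.mem_setOf_eq, wfun, Set.indicator_of_mem (Set.mem_Ioi.2 hx.1)]
      positivity
    have : volume.restrict I (Set.Ioc lam b) = 0 :=
      le_antisymm (le_trans (measure_mono hsub) hae.le) zero_le
    rw [Measure.restrict_apply measurableSet_Ioc] at this
    have hss : Set.Ioc lam b ∩ I = Set.Ioc lam b := by
      rw [Set.inter_eq_left]
      intro x hx
      exact hIoc ⟨lt_of_le_of_lt (ha0.le.trans hal) hx.1, hx.2⟩
    rw [hss, Real.volume_Ioc] at this
    simp only [ENNReal.ofReal_eq_zero] at this
    linarith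
  -- a continuity point in (a, b)
  have hD : Set.Countable {x | ¬ContinuousAt F x} := hFanti.countable_not_continuousAt
  have hpt : ∃ a₀, a₀ ∈ Set.Ioo a b ∧ ContinuousAt F a₀ := by
    by_contra hcon
    push_neg at hcon
    have hsub : Set.Ioo a b ⊆ {x | ¬ContinuousAt F x} := fun x hx => hcon x hx
    have := (hD.mono hsub).measure_zero (volume)
    rw [Real.volume_Ioo] at this
    simp only [ENNReal.ofReal_eq_zero] at this
    linarith
  obtain ⟨a₀, ha₀, hcont⟩ := hpt
  exact ⟨a, a₀, F, ha0, ha₀.1, hmem, hFeq, hFanti,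
    fun lam h1 h2 => hFpos lam h1 (lt_of_le_of_lt h2 ha₀.2), hcont⟩

end Base

set_option maxHeartbeats 3000000 in
/-- Theorem 4.5: every nontrivial Cesàro space `CX` contains an order asymptotically
isometric copy of `ℓ¹`. -/
theorem cesaro_asymptotically_isometric_l1 (I : Set ℝ)
    (hI : I = Set.Icc 0 1 ∨ I = Set.Ici 0) (X : BanachFunctionSpace I)
    (hne : ∃ f : ℝ → ℝ, Measurable f ∧ MemCX I X f ∧
        ¬ (∀ᵐ x ∂(volume.restrict I), f x = 0)) :
    ∃ (g : ℕ → ℝ → ℝ) (ε : ℕ → ℝ),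
      (∀ n, MemCX I X (g n) ∧ X.norm (cesR (g n)) = 1) ∧
      (∀ m n, m ≠ n → ∀ x, g m x = 0 ∨ g n x = 0) ∧
      (∀ n, ε n ∈ Set.Ioo (0:ℝ) 1) ∧ Tendsto ε atTop (nhds 0) ∧
      ∀ α : ℕ → ℝ, Summable (fun n => |α n|) →
        MemCX I X (fun x => ∑' n, α n * g n x) ∧
        (∑' n, (1 - ε n) * |α n|) ≤ X.norm (cesR fun x => ∑' n, α n * g n x) ∧
        X.norm (cesR fun x => ∑' n, α n * g n x) ≤ ∑' n, |α n| := by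
  obtain ⟨a, a₀, F, ha0, haa₀, hmemw, hFeq, hFanti, hFpos, hcont⟩ := exists_setup X hI hne
  -- the sequence of partition points
  set d : ℝ := (a₀ - a)/2 with hd
  have hd0 : 0 < d := by rw [hd]; linarith
  set seq : ℕ → ℝ := fun n => a₀ - d/(n+1) with hseq
  have hseq_lt : ∀ n, seq n < a₀ := by
    intro n
    have : (0:ℝ) < d/(n+1) := by positivity
    simp only [hseq]; linarith
  have hseq_gt : ∀ n, a < seq n := by
    intro n
    have h1 : d/((n:ℝ)+1) ≤ d := by
      rw [div_le_iff₀ (by positivity)]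
      nlinarith [Nat.cast_nonneg (α := ℝ) n]
    simp only [hseq]; rw [hd] at *; linarith
  have hseq_mono : ∀ n, seq n < seq (n+1) := by
    intro n
    simp only [hseq]
    have h1 : d/((n:ℝ)+1+1) < d/((n:ℝ)+1) := by
      apply div_lt_div_of_pos_left hd0 (by positivity) (by linarith)
    push_cast
    linarith
  have hseq_mono' : StrictMono seq := strictMono_nat_of_lt_succ hseq_mono
  have hseq_tend : Tendsto seq atTop (nhds a₀) := by
    have h1 : Tendsto (fun n : ℕ => d * (1/((n:ℝ)+1))) atTop (nhds (d * 0)) :=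
      tendsto_const_nhds.mul tendsto_one_div_add_atTop_nhds_zero_nat
    have h2 : Tendsto (fun n : ℕ => a₀ - d * (1/((n:ℝ)+1))) atTop (nhds (a₀ - d * 0)) :=
      tendsto_const_nhds.sub h1
    simp only [mul_zero, sub_zero] at h2
    convert h2 using 2 with n
    simp only [hseq]; ring
  have hseq0 : ∀ n, 0 < seq n := fun n => ha0.trans (hseq_gt n)
  have hFa₀ : 0 < F a₀ := hFpos a₀ haa₀.le le_rfl
  have hFs : ∀ n, 0 < F (seq n) := fun n => hFpos _ (hseq_gt n).le (hseq_lt n).le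
  -- building blocks
  set χ : ℕ → ℝ → ℝ := fun n => Set.indicator (Set.Ioc (seq n) (seq (n+1))) 1 with hχ
  set ℓ : ℕ → ℝ := fun n => seq (n+1) - seq n with hℓ
  have hℓ0 : ∀ n, 0 < ℓ n := fun n => sub_pos.2 (hseq_mono n)
  set N : ℕ → ℝ := fun n => X.norm (cesR (χ n)) with hN
  have hχle : ∀ n x, cesR (χ n) x ≤ ℓ n * wfun (seq n) x := fun n x =>
    cesR_ind_le (hseq0 n) (hseq_mono n).le x
  have hχge : ∀ n x, ℓ n * wfun (seq (n+1)) x ≤ cesR (χ n) x := fun n x =>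
    wfun_le_cesR_ind (hseq0 n) (hseq_mono n).le x
  have hχR0 : ∀ n x, 0 ≤ cesR (χ n) x := fun n x => cesR_nonneg _ x
  have hmemχ : ∀ n, X.Mem (cesR (χ n)) := by
    intro n
    apply X.ideal_mem _ (ℓ n • wfun (seq n)) _
      (X.smul_mem _ _ (hmemw _ (hseq_gt n).le))
    filter_upwards with x
    rw [abs_of_nonneg (hχR0 n x), Pi.smul_apply, smul_eq_mul,
      abs_of_nonneg (mul_nonneg (hℓ0 n).le (wfun_nonneg (hseq0 n).le x))]
    exact hχle n x
  have hNle : ∀ n, N n ≤ ℓ n * F (seq n) := by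
    intro n
    rw [hFeq _ (hseq_gt n).le]
    have := X.ideal_norm (cesR (χ n)) (ℓ n • wfun (seq n)) ?_
      (X.smul_mem _ _ (hmemw _ (hseq_gt n).le))
    · rwa [X.norm_smul, abs_of_pos (hℓ0 n)] at this
    filter_upwards with x
    rw [abs_of_nonneg (hχR0 n x), Pi.smul_apply, smul_eq_mul,
      abs_of_nonneg (mul_nonneg (hℓ0 n).le (wfun_nonneg (hseq0 n).le x))]
    exact hχle n x
  have hNge : ∀ n, ℓ n * F (seq (n+1)) ≤ N n := by
    intro n
    rw [hFeq _ (hseq_gt (n+1)).le]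
    have := X.ideal_norm (ℓ n • wfun (seq (n+1))) (cesR (χ n)) ?_ (hmemχ n)
    · rwa [X.norm_smul, abs_of_pos (hℓ0 n)] at this
    filter_upwards with x
    rw [abs_of_nonneg (hχR0 n x), Pi.smul_apply, smul_eq_mul,
      abs_of_nonneg (mul_nonneg (hℓ0 n).le (wfun_nonneg (hseq0 (n+1)).le x))]
    exact hχge n x
  have hN0 : ∀ n, 0 < N n := fun n =>
    lt_of_lt_of_le (mul_pos (hℓ0 n) (hFs (n+1))) (hNge n)
  -- the functions g n
  set g : ℕ → ℝ → ℝ := fun n => (1/N n) • χ n with hg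
  have hgval : ∀ n x, g n x = (1/N n) * χ n x := fun n x => rfl
  have hχ01 : ∀ n x, χ n x = 0 ∨ χ n x = 1 := by
    intro n x
    by_cases hx : x ∈ Set.Ioc (seq n) (seq (n+1))
    · right; simp [hχ, Set.indicator_of_mem hx]
    · left; simp [hχ, Set.indicator_of_notMem hx]
  have hg0 : ∀ n x, 0 ≤ g n x := by
    intro n x
    rw [hgval]
    rcases hχ01 n x with h | h <;> rw [h]
    · simp
    · have := hN0 n; positivity
  have hgsupp : ∀ n x, g n x ≠ 0 → x ∈ Set.Ioc (seq n) (seq (n+1)) := by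
    intro n x hx
    by_contra hmem
    apply hx
    rw [hgval]
    have : χ n x = 0 := by simp only [hχ]; exact Set.indicator_of_notMem hmem _
    rw [this, mul_zero]
  have hdisj : ∀ m n, m ≠ n → ∀ x, g m x = 0 ∨ g n x = 0 := by
    intro m n hmn x
    by_contra hcon
    push_neg at hcon
    obtain ⟨h1, h2⟩ := hcon
    have hx1 := hgsupp m x h1
    have hx2 := hgsupp n x h2
    rcases lt_or_gt_of_ne hmn with h | h
    · have h1 : seq (m+1) ≤ seq n := hseq_mono'.le_iff_le.2 h
      have := hx2.1
      have := hx1.2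
      linarith
    · have h1 : seq (n+1) ≤ seq m := hseq_mono'.le_iff_le.2 h
      have := hx1.1
      have := hx2.2
      linarith
  -- norm-one and membership
  have hcesRg : ∀ n, cesR (g n) = |1/N n| • cesR (χ n) := fun n => cesR_smul _ _
  have hnorm1 : ∀ n, X.norm (cesR (g n)) = 1 := by
    intro n
    rw [hcesRg n, X.norm_smul, abs_abs, abs_of_pos (by have := hN0 n; positivity)]
    show 1 / N n * N n = 1
    field_simp [(hN0 n).ne']
  have hmemg : ∀ n, MemCX I X (g n) := by
    intro n
    constructor
    · filter_upwards with x
      rw [hg]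
      show ces ((1/N n) • χ n) x ≠ ⊤
      rw [ces_smul, hχ]
      show ENNReal.ofReal |1/N n| *
        ces (Set.indicator (Set.Ioc (seq n) (seq (n+1))) 1) x ≠ ⊤
      rw [ces_indicator (hseq0 n)]
      exact ENNReal.mul_ne_top (by simp) (ENNReal.mul_ne_top (by simp) (by simp))
    · rw [hcesRg n]
      exact X.smul_mem _ _ (hmemχ n)
  -- the two key pointwise bounds
  set B : ℝ := 1 / F a₀ with hB
  have hB0 : 0 < B := by rw [hB]; positivity
  have hratio_le : ∀ n, ℓ n / N n ≤ B := by
    intro n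
    have h1 : ℓ n / N n ≤ 1 / F (seq (n+1)) := by
      rw [div_le_div_iff₀ (hN0 n) (hFs (n+1))]
      calc ℓ n * F (seq (n+1)) ≤ N n := hNge n
        _ = N n * 1 := (mul_one _).symm
        _ ≤ _ := le_of_eq (mul_comm _ _)
    have h2 : (1:ℝ) / F (seq (n+1)) ≤ 1 / F a₀ :=
      one_div_le_one_div_of_le hFa₀ (hFanti (hseq_lt (n+1)).le)
    rw [hB]; linarith
  have hratio_ge : ∀ n, 1 / F (seq n) ≤ ℓ n / N n := by
    intro n
    rw [div_le_div_iff₀ (hFs n) (hN0 n)]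
    calc 1 * N n = N n := one_mul _
      _ ≤ ℓ n * F (seq n) := hNle n
      _ = F (seq n) * ℓ n := mul_comm _ _
      _ ≤ ℓ n * F (seq n) := le_of_eq (mul_comm _ _)
      _ ≤ _ := le_rfl

  have hU : ∀ n x, cesR (g n) x ≤ B * wfun a x := by
    intro n x
    rw [hcesRg n, Pi.smul_apply, smul_eq_mul, abs_of_pos (by have := hN0 n; positivity)]
    calc (1/N n) * cesR (χ n) x ≤ (1/N n) * (ℓ n * wfun (seq n) x) :=
          mul_le_mul_of_nonneg_left (hχle n x) (by have := hN0 n; positivity)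
      _ = (ℓ n / N n) * wfun (seq n) x := by ring
      _ ≤ (ℓ n / N n) * wfun a x := by
          apply mul_le_mul_of_nonneg_left (wfun_anti ha0.le (hseq_gt n).le x)
          have := hℓ0 n; have := hN0 n; positivity
      _ ≤ B * wfun a x :=
          mul_le_mul_of_nonneg_right (hratio_le n) (wfun_nonneg ha0.le x)
  have hL : ∀ n x, (1 / F (seq n)) * wfun a₀ x ≤ cesR (g n) x := by
    intro n x
    rw [hcesRg n, Pi.smul_apply, smul_eq_mul, abs_of_pos (by have := hN0 n; positivity)]
    calc (1 / F (seq n)) * wfun a₀ x ≤ (ℓ n / N n) * wfun a₀ x :=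
          mul_le_mul_of_nonneg_right (hratio_ge n) (wfun_nonneg (ha0.trans haa₀).le x)
      _ ≤ (ℓ n / N n) * wfun (seq (n+1)) x := by
          apply mul_le_mul_of_nonneg_left (wfun_anti (hseq0 (n+1)).le (hseq_lt (n+1)).le x)
          have := hℓ0 n; have := hN0 n; positivity
      _ = (1/N n) * (ℓ n * wfun (seq (n+1)) x) := by ring
      _ ≤ (1/N n) * cesR (χ n) x :=
          mul_le_mul_of_nonneg_left (hχge n x) (by have := hN0 n; positivity)
  -- the sequence ε
  set ε : ℕ → ℝ := fun n => max (1 - F a₀ / F (seq n)) (1/(n+2)) with hε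
  have hεpos : ∀ n, 0 < ε n := fun n =>
    lt_max_of_lt_right (by positivity)
  have hεlt1 : ∀ n, ε n < 1 := by
    intro n
    apply max_lt
    · have : 0 < F a₀ / F (seq n) := div_pos hFa₀ (hFs n)
      linarith
    · rw [div_lt_one (by positivity)]
      have : (0:ℝ) ≤ n := Nat.cast_nonneg n
      linarith
  have hεge : ∀ n, 1 - ε n ≤ F a₀ / F (seq n) := by
    intro n
    have := le_max_left (1 - F a₀ / F (seq n)) (1/((n:ℝ)+2))
    simp only [hε]; linarith
  have hεtend : Tendsto ε atTop (nhds 0) := by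
    have hFt : Tendsto (fun n => F (seq n)) atTop (nhds (F a₀)) :=
      hcont.tendsto.comp hseq_tend
    have hq : Tendsto (fun n => 1 - F a₀ / F (seq n)) atTop (nhds 0) := by
      have := (tendsto_const_nhds (x := F a₀)).div hFt hFa₀.ne'
      rw [div_self hFa₀.ne'] at this
      have h2 := (tendsto_const_nhds (x := (1:ℝ))).sub this
      simpa using h2
    have habs : Tendsto (fun n => |1 - F a₀ / F (seq n)|) atTop (nhds 0) := by
      have := hq.abs
      simpa using this
    have h2 : Tendsto (fun n : ℕ => 1/((n:ℝ)+2)) atTop (nhds 0) := by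
      have := (tendsto_one_div_add_atTop_nhds_zero_nat (𝕜 := ℝ)).comp (tendsto_add_atTop_nat 1)
      convert this using 2 with n
      simp only [Function.comp_apply]
      push_cast
      ring
    have hup : Tendsto (fun n => |1 - F a₀ / F (seq n)| + 1/((n:ℝ)+2)) atTop (nhds 0) := by
      have := habs.add h2
      simpa using this
    apply tendsto_of_tendsto_of_tendsto_of_le_of_le tendsto_const_nhds hup
    · exact fun n => (hεpos n).le
    · intro n
      apply max_le
      · exact le_add_of_le_of_nonneg (le_abs_self _) (by positivity)
      · exact le_add_of_nonneg_left (abs_nonneg _)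
  -- measurability of g
  have hgmeas : ∀ n, Measurable (g n) := by
    intro n
    rw [hg]
    show Measurable ((1/N n) • Set.indicator (Set.Ioc (seq n) (seq (n+1))) (1:ℝ→ℝ))
    exact (measurable_const.indicator measurableSet_Ioc).const_smul _
  refine ⟨g, ε, fun n => ⟨hmemg n, hnorm1 n⟩, hdisj, fun n => ⟨hεpos n, hεlt1 n⟩, hεtend, ?_⟩
  intro α hα
  set A : ℝ := ∑' n, |α n| with hA
  have hA0 : 0 ≤ A := tsum_nonneg (fun n => abs_nonneg _)
  set h : ℝ → ℝ := fun x => ∑' n, α n * g n x with hh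
  -- pointwise description of |h|
  have habs : ∀ (β : ℕ → ℝ) (x k), x ∈ Set.Ioc (seq k) (seq (k+1)) →
      (∑' n, β n * g n x) = β k * g k x := by
    intro β x k hk
    apply tsum_eq_single k
    intro n hn
    have hgk : g k x ≠ 0 := by
      rw [hgval, hχ]
      show 1 / N k * Set.indicator (Set.Ioc (seq k) (seq (k+1))) 1 x ≠ 0
      rw [Set.indicator_of_mem hk]
      simp [(hN0 k).ne']
    rcases hdisj n k hn x with h' | h'
    · rw [h', mul_zero]
    · exact absurd h' hgk
  have hzero : ∀ x, (¬ ∃ k, x ∈ Set.Ioc (seq k) (seq (k+1))) → ∀ n, g n x = 0 := by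
    intro x hx n
    by_contra hne'
    exact hx ⟨n, hgsupp n x hne'⟩
  -- ENNReal pointwise identity
  have hofReal : ∀ t, ENNReal.ofReal |h t| = ∑' n, ENNReal.ofReal (|α n| * g n t) := by
    intro t
    by_cases ht : ∃ k, t ∈ Set.Ioc (seq k) (seq (k+1))
    · obtain ⟨k, hk⟩ := ht
      rw [hh]
      show ENNReal.ofReal |∑' n, α n * g n t| = _
      rw [habs α t k hk]
      rw [tsum_eq_single k]
      · rw [abs_mul, abs_of_nonneg (hg0 k t)]
      · intro n hn
        have : g n t = 0 := by
          rcases hdisj n k hn t with h' | h'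
          · exact h'
          · exfalso
            apply absurd h'
            rw [hgval, hχ]
            show ¬ 1 / N k * Set.indicator (Set.Ioc (seq k) (seq (k+1))) 1 t = 0
            rw [Set.indicator_of_mem hk]
            simp [(hN0 k).ne']
        rw [this, mul_zero, ENNReal.ofReal_zero]
    · have hz := hzero t ht
      rw [hh]
      show ENNReal.ofReal |∑' n, α n * g n t| = _
      have h1 : (∑' n, α n * g n t) = 0 := by
        rw [tsum_congr (fun n => by rw [hz n, mul_zero]), tsum_zero]
      have h2 : (∑' n, ENNReal.ofReal (|α n| * g n t)) = 0 := by
        rw [ENNReal.tsum_eq_zero.2 (fun n => by rw [hz n, mul_zero, ENNReal.ofReal_zero])]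
      rw [h1, h2, abs_zero, ENNReal.ofReal_zero]
  -- ces of h as a sum
  have hces_h : ∀ x, ces h x = ∑' n, ENNReal.ofReal |α n| * ces (g n) x := by
    intro x
    unfold ces
    simp_rw [hofReal]
    rw [lintegral_tsum (f := fun n t => ENNReal.ofReal (|α n| * g n t))
      (fun n => (Measurable.ennreal_ofReal ((hgmeas n).const_mul |α n|)).aemeasurable)]
    rw [← ENNReal.tsum_mul_left]
    congr 1
    funext n
    have : ∀ t, ENNReal.ofReal (|α n| * g n t) =
        ENNReal.ofReal |α n| * ENNReal.ofReal |g n t| := by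
      intro t
      rw [← ENNReal.ofReal_mul (abs_nonneg _), abs_of_nonneg (hg0 n t)]
    simp_rw [this]
    rw [lintegral_const_mul' _ _ (by simp)]
    ring
  -- finiteness of ces (g n)
  have hcgfin : ∀ n x, ces (g n) x ≠ ⊤ := by
    intro n x
    rw [hg]
    show ces ((1/N n) • χ n) x ≠ ⊤
    rw [ces_smul, hχ]
    show ENNReal.ofReal |1/N n| *
      ces (Set.indicator (Set.Ioc (seq n) (seq (n+1))) 1) x ≠ ⊤
    rw [ces_indicator (hseq0 n)]
    exact ENNReal.mul_ne_top (by simp) (ENNReal.mul_ne_top (by simp) (by simp))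
  have hcg_eq : ∀ n x, ces (g n) x = ENNReal.ofReal (cesR (g n) x) := by
    intro n x
    rw [cesR, ENNReal.ofReal_toReal (hcgfin n x)]
  have hces_h' : ∀ x, ces h x = ∑' n, ENNReal.ofReal (|α n| * cesR (g n) x) := by
    intro x
    rw [hces_h x]
    congr 1
    funext n
    rw [hcg_eq n x, ← ENNReal.ofReal_mul (abs_nonneg _)]
  -- finiteness of ces h
  have hfinh : ∀ x, ces h x ≠ ⊤ := by
    intro x
    rw [hces_h' x]
    have hle : (∑' n, ENNReal.ofReal (|α n| * cesR (g n) x)) ≤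
        ENNReal.ofReal A * ENNReal.ofReal (B * wfun a x) := by
      calc (∑' n, ENNReal.ofReal (|α n| * cesR (g n) x))
          ≤ ∑' n, ENNReal.ofReal |α n| * ENNReal.ofReal (B * wfun a x) := by
            apply ENNReal.tsum_le_tsum
            intro n
            calc ENNReal.ofReal (|α n| * cesR (g n) x)
                ≤ ENNReal.ofReal (|α n| * (B * wfun a x)) :=
                  ENNReal.ofReal_le_ofReal
                    (mul_le_mul_of_nonneg_left (hU n x) (abs_nonneg _))
              _ = ENNReal.ofReal |α n| * ENNReal.ofReal (B * wfun a x) :=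
                  ENNReal.ofReal_mul (abs_nonneg _)
        _ = (∑' n, ENNReal.ofReal |α n|) * ENNReal.ofReal (B * wfun a x) :=
            ENNReal.tsum_mul_right
        _ = ENNReal.ofReal A * ENNReal.ofReal (B * wfun a x) := by
            rw [hA, ENNReal.ofReal_tsum_of_nonneg (fun n => abs_nonneg _) hα]
    exact ne_top_of_le_ne_top (ENNReal.mul_ne_top (by simp) (by simp)) hle
  -- summability and pointwise formula for cesR h
  have hsumm : ∀ x, Summable (fun n => |α n| * cesR (g n) x) := by
    intro x
    apply Summable.of_nonneg_of_le
      (fun n => mul_nonneg (abs_nonneg _) (cesR_nonneg _ x))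
      (fun n => mul_le_mul_of_nonneg_left (hU n x) (abs_nonneg _))
    exact hα.mul_right _
  have hScesR : ∀ x, cesR h x = ∑' n, |α n| * cesR (g n) x := by
    intro x
    rw [cesR, hces_h' x, ENNReal.tsum_toReal_eq (fun n => ENNReal.ofReal_ne_top)]
    congr 1
    funext n
    rw [ENNReal.toReal_ofReal (mul_nonneg (abs_nonneg _) (cesR_nonneg _ x))]
  have hSle : ∀ x, (∑' n, |α n| * cesR (g n) x) ≤ (A * B) * wfun a x := by
    intro x
    have h1 : (∑' n, |α n| * cesR (g n) x) ≤ ∑' n, |α n| * (B * wfun a x) :=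
      Summable.tsum_le_tsum (fun n => mul_le_mul_of_nonneg_left (hU n x) (abs_nonneg _))
        (hsumm x) (hα.mul_right _)
    rw [tsum_mul_right] at h1
    calc (∑' n, |α n| * cesR (g n) x) ≤ A * (B * wfun a x) := h1
      _ = (A * B) * wfun a x := by ring
  have hS0 : ∀ x, 0 ≤ (∑' n, |α n| * cesR (g n) x) :=
    fun x => tsum_nonneg (fun n => mul_nonneg (abs_nonneg _) (cesR_nonneg _ x))
  -- membership of h in CX
  have hmemh : MemCX I X h := by
    constructor
    · filter_upwards with x
      exact hfinh x
    · apply X.ideal_mem _ ((A * B) • wfun a) _ (X.smul_mem _ _ (hmemw a le_rfl))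
      filter_upwards with x
      rw [Pi.smul_apply, smul_eq_mul,
        abs_of_nonneg (mul_nonneg (mul_nonneg hA0 hB0.le) (wfun_nonneg ha0.le x)),
        abs_of_nonneg (by rw [hScesR x]; exact hS0 x), hScesR x]
      exact hSle x
  -- partial sums and tails
  set P : ℕ → ℝ → ℝ := fun N x => ∑ n ∈ Finset.range N, |α n| * cesR (g n) x with hP
  set R : ℕ → ℝ → ℝ := fun N x => ∑' n, |α (n + N)| * cesR (g (n + N)) x with hR
  set tl : ℕ → ℝ := fun N => ∑' n, |α (n + N)| with htl
  have hsummshift : ∀ N : ℕ, Summable (fun n => |α (n + N)|) :=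
    fun N => (summable_nat_add_iff N).2 hα
  have htl0 : ∀ N, 0 ≤ tl N := fun N => tsum_nonneg (fun n => abs_nonneg _)
  have hsplit : ∀ N x, P N x + R N x = ∑' n, |α n| * cesR (g n) x := by
    intro N x
    exact Summable.sum_add_tsum_nat_add N (hsumm x)
  have hPsucc : ∀ N, P (N+1) = P N + |α N| • cesR (g N) := by
    intro N
    funext x
    simp only [hP, Pi.add_apply, Pi.smul_apply, smul_eq_mul, Finset.sum_range_succ]
  have hMemP : ∀ N, X.Mem (P N) := by
    intro N
    induction N with
    | zero =>
      have : P 0 = (0 : ℝ → ℝ) := by funext x; simp [hP]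
      rw [this]; exact X.zero_mem
    | succ N ih =>
      rw [hPsucc N]
      exact X.add_mem _ _ ih (X.smul_mem _ _ ((hmemg N).2))
  have hnormP : ∀ N, X.norm (P N) ≤ ∑ n ∈ Finset.range N, |α n| := by
    intro N
    induction N with
    | zero =>
      have : P 0 = (0 : ℝ → ℝ) := by funext x; simp [hP]
      rw [this, X.norm_zero, Finset.sum_range_zero]
    | succ N ih =>
      rw [hPsucc N, Finset.sum_range_succ]
      calc X.norm (P N + |α N| • cesR (g N))
          ≤ X.norm (P N) + X.norm (|α N| • cesR (g N)) :=
            X.norm_add_le _ _ (hMemP N) (X.smul_mem _ _ ((hmemg N).2))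
        _ = X.norm (P N) + |α N| := by
            rw [X.norm_smul, abs_abs, hnorm1 N, mul_one]
        _ ≤ _ := by linarith
  have hRle : ∀ N x, R N x ≤ (tl N * B) * wfun a x := by
    intro N x
    have h1 : R N x ≤ ∑' n, |α (n + N)| * (B * wfun a x) := by
      apply Summable.tsum_le_tsum
        (fun n => mul_le_mul_of_nonneg_left (hU _ x) (abs_nonneg _))
        ((summable_nat_add_iff N).2 (hsumm x)) ((hsummshift N).mul_right _)
    rw [tsum_mul_right] at h1
    calc R N x ≤ tl N * (B * wfun a x) := h1
      _ = (tl N * B) * wfun a x := by ring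
  have hR0 : ∀ N x, 0 ≤ R N x := fun N x =>
    tsum_nonneg (fun n => mul_nonneg (abs_nonneg _) (cesR_nonneg _ x))
  have hMemR : ∀ N, X.Mem (R N) := by
    intro N
    apply X.ideal_mem _ ((tl N * B) • wfun a) _ (X.smul_mem _ _ (hmemw a le_rfl))
    filter_upwards with x
    rw [Pi.smul_apply, smul_eq_mul, abs_of_nonneg (hR0 N x),
      abs_of_nonneg (mul_nonneg (mul_nonneg (htl0 N) hB0.le) (wfun_nonneg ha0.le x))]
    exact hRle N x
  have hnormR : ∀ N, X.norm (R N) ≤ tl N * (B * X.norm (wfun a)) := by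
    intro N
    have := X.ideal_norm (R N) ((tl N * B) • wfun a) ?_ (X.smul_mem _ _ (hmemw a le_rfl))
    · rw [X.norm_smul, abs_of_nonneg (mul_nonneg (htl0 N) hB0.le)] at this
      calc X.norm (R N) ≤ tl N * B * X.norm (wfun a) := this
        _ = tl N * (B * X.norm (wfun a)) := by ring
    filter_upwards with x
    rw [Pi.smul_apply, smul_eq_mul, abs_of_nonneg (hR0 N x),
      abs_of_nonneg (mul_nonneg (mul_nonneg (htl0 N) hB0.le) (wfun_nonneg ha0.le x))]
    exact hRle N x
  have hdecomp : ∀ N, cesR h = P N + R N := by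
    intro N
    funext x
    rw [Pi.add_apply, hScesR x, hsplit N x]
  -- upper bound
  have hupper : X.norm (cesR h) ≤ A := by
    have hkey : ∀ N, X.norm (cesR h) ≤
        (∑ n ∈ Finset.range N, |α n|) + tl N * (B * X.norm (wfun a)) := by
      intro N
      rw [hdecomp N]
      calc X.norm (P N + R N) ≤ X.norm (P N) + X.norm (R N) :=
            X.norm_add_le _ _ (hMemP N) (hMemR N)
        _ ≤ _ := add_le_add (hnormP N) (hnormR N)
    have h1 : Tendsto (fun N => ∑ n ∈ Finset.range N, |α n|) atTop (nhds A) :=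
      hα.hasSum.tendsto_sum_nat
    have h2 : Tendsto tl atTop (nhds 0) := tendsto_sum_nat_add (fun n => |α n|)
    have h3 : Tendsto (fun N => (∑ n ∈ Finset.range N, |α n|) +
        tl N * (B * X.norm (wfun a))) atTop (nhds (A + 0 * (B * X.norm (wfun a)))) :=
      h1.add (h2.mul_const _)
    rw [zero_mul, add_zero] at h3
    exact ge_of_tendsto' h3 hkey
  -- lower bound
  have hεnn : ∀ n, 0 ≤ 1 - ε n := fun n => by have := hεlt1 n; linarith
  have hlower : (∑' n, (1 - ε n) * |α n|) ≤ X.norm (cesR h) := by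
    have hkey : ∀ N : ℕ, (∑ n ∈ Finset.range N, (1 - ε n) * |α n|) ≤ X.norm (cesR h) := by
      intro N
      set cN : ℝ := (∑ n ∈ Finset.range N, (1 - ε n) * |α n|) * B with hcN
      have hcN0 : 0 ≤ cN := by
        apply mul_nonneg _ hB0.le
        exact Finset.sum_nonneg (fun n _ => mul_nonneg (hεnn n) (abs_nonneg _))
      have hpt : ∀ x, cN * wfun a₀ x ≤ cesR h x := by
        intro x
        have hterm : ∀ n, ((1 - ε n) * |α n|) * (B * wfun a₀ x) ≤ |α n| * cesR (g n) x := by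
          intro n
          have h1 : (1 - ε n) * B ≤ 1 / F (seq n) := by
            rw [hB]
            calc (1 - ε n) * (1 / F a₀) ≤ (F a₀ / F (seq n)) * (1 / F a₀) :=
                  mul_le_mul_of_nonneg_right (hεge n) (by positivity)
              _ = 1 / F (seq n) := by
                  rw [div_mul_div_comm, mul_one, mul_comm (F (seq n)) (F a₀), ← div_div, div_self hFa₀.ne']
          calc ((1 - ε n) * |α n|) * (B * wfun a₀ x)
              = |α n| * (((1 - ε n) * B) * wfun a₀ x) := by ring
            _ ≤ |α n| * ((1 / F (seq n)) * wfun a₀ x) := by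
                apply mul_le_mul_of_nonneg_left _ (abs_nonneg _)
                exact mul_le_mul_of_nonneg_right h1
                  (wfun_nonneg (ha0.trans haa₀).le x)
            _ ≤ |α n| * cesR (g n) x :=
                mul_le_mul_of_nonneg_left (hL n x) (abs_nonneg _)
        calc cN * wfun a₀ x
            = ∑ n ∈ Finset.range N, ((1 - ε n) * |α n|) * (B * wfun a₀ x) := by
              rw [hcN, Finset.sum_mul, Finset.sum_mul]
              congr 1
              funext n
              ring
          _ ≤ ∑ n ∈ Finset.range N, |α n| * cesR (g n) x :=
              Finset.sum_le_sum (fun n _ => hterm n)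
          _ = P N x := rfl
          _ ≤ P N x + R N x := le_add_of_nonneg_right (hR0 N x)
          _ = cesR h x := by rw [hsplit N x, ← hScesR x]
      have hnle := X.ideal_norm (cN • wfun a₀) (cesR h) ?_ hmemh.2
      · rw [X.norm_smul, abs_of_nonneg hcN0, ← hFeq a₀ haa₀.le] at hnle
        calc (∑ n ∈ Finset.range N, (1 - ε n) * |α n|)
            = cN * F a₀ := by rw [hcN, hB]; field_simp
          _ ≤ X.norm (cesR h) := hnle
      filter_upwards with x
      rw [Pi.smul_apply, smul_eq_mul, abs_of_nonneg (cesR_nonneg h x),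
        abs_of_nonneg (mul_nonneg hcN0 (wfun_nonneg (ha0.trans haa₀).le x))]
      exact hpt x
    have hsummε : Summable (fun n => (1 - ε n) * |α n|) := by
      apply Summable.of_nonneg_of_le (fun n => mul_nonneg (hεnn n) (abs_nonneg _))
        (fun n => ?_) hα
      apply mul_le_of_le_one_left (abs_nonneg _)
      have := hεpos n; linarith
    exact le_of_tendsto' hsummε.hasSum.tendsto_sum_nat hkey
  exact ⟨hmemh, hlower, hupper⟩
end
end
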